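/- Assume (μ_t)_{t>0} satisfies conditions (M) and (T), let (h_n) ⊂ (0,∞) be a null sequence and (b,σ,ν) a Lévy triplet such that ∫ (f(x+y)−f(x))/h_n μ_{h_n}(dy) → (L_{(b,σ,ν)}f)(x) for all f ∈ C_c²(ℝ^d) and x ∈ ℝ^d. Then for every f ∈ UC_b²(ℝ^d) (bounded uniformly continuous with bounded uniformly continuous derivatives up to order 2), L_{(b,σ,ν)}f ∈ UC_b(ℝ^d) and ‖∫ (f(·+y)−f(·))/h_n μ_{h_n}(dy) − L_{(b,σ,ν)}f‖_∞ → 0 as n → ∞; moreover, if f ∈ C_0²(ℝ^d) then L_{(b,σ,ν)}f ∈ C_0(ℝ^d). -/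

import Mathlib

open MeasureTheory Filter Set
open scoped ENNReal Topology

/-- The generator `L_{(b,σ,ν)}` of a Lévy process with triplet `(b,σ,ν)`:
`L f x = ⟨b,∇f(x)⟩ + (1/2) tr(σ ∇²f(x)) + ∫ [f(x+y) − f(x) − ⟨∇f(x), y 1_{|y|≤1}⟩] dν`. -/
noncomputable def levyGen {d : ℕ} (b : EuclideanSpace ℝ (Fin d))
    (σ : Matrix (Fin d) (Fin d) ℝ) (ν : Measure (EuclideanSpace ℝ (Fin d)))
    (f : EuclideanSpace ℝ (Fin d) → ℝ) (x : EuclideanSpace ℝ (Fin d)) : ℝ :=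
  fderiv ℝ f x b
    + (1/2) * ∑ i, ∑ j, σ i j *
        (fderiv ℝ (fderiv ℝ f) x (EuclideanSpace.single i (1:ℝ)))
          (EuclideanSpace.single j (1:ℝ))
    + ∫ y, (f (x + y) - f x - (if ‖y‖ ≤ 1 then fderiv ℝ f x y else 0)) ∂ν

open Metric

section AuxGen

variable {E F : Type*} [NormedAddCommGroup E] [NormedSpace ℝ E]
  [NormedAddCommGroup F] [NormedSpace ℝ F]

lemma fderiv_comp_add (g : E → F) (hg : Differentiable ℝ g) (v x : E) :
    fderiv ℝ (fun z => g (v + z)) x = fderiv ℝ g (v + x) := by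
  have h1 : HasFDerivAt (fun z : E => v + z) (ContinuousLinearMap.id ℝ E) x :=
    (hasFDerivAt_id x).const_add v
  have h2 := ((hg (v + x)).hasFDerivAt.comp x h1)
  simpa [Function.comp_def] using h2.fderiv

lemma fderiv2_comp_add (g : E → F) (hg : ContDiff ℝ 2 g) (v x : E) :
    fderiv ℝ (fderiv ℝ (fun z => g (v + z))) x = fderiv ℝ (fderiv ℝ g) (v + x) := by
  have hg1 : Differentiable ℝ g := hg.differentiable two_ne_zero
  have hgd : ContDiff ℝ 1 (fderiv ℝ g) := hg.fderiv_right (le_refl _)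
  have e1 : fderiv ℝ (fun z => g (v + z)) = fun z => fderiv ℝ g (v + z) := by
    funext z; exact fderiv_comp_add g hg1 v z
  rw [e1]
  exact fderiv_comp_add (fderiv ℝ g) (hgd.differentiable one_ne_zero) v x

lemma taylor2_bound {f : E → ℝ} (hf : ContDiff ℝ 2 f) {x y : E} {K₂ : ℝ}
    (h2 : ∀ z ∈ closedBall x 1, ‖fderiv ℝ (fderiv ℝ f) z‖ ≤ K₂) (hy : ‖y‖ ≤ 1) :
    |f (x + y) - f x - fderiv ℝ f x y| ≤ K₂ * ‖y‖ ^ 2 := by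
  have hf1 : Differentiable ℝ f := hf.differentiable two_ne_zero
  have hfd : ContDiff ℝ 1 (fderiv ℝ f) := hf.fderiv_right (le_refl _)
  have hfd' : Differentiable ℝ (fderiv ℝ f) := hfd.differentiable one_ne_zero
  -- Lipschitz bound for fderiv f on closedBall x 1
  have hlip : ∀ z ∈ closedBall x 1, ‖fderiv ℝ f z - fderiv ℝ f x‖ ≤ K₂ * ‖z - x‖ := by
    intro z hz
    have := (convex_closedBall x 1).norm_image_sub_le_of_norm_hasFDerivWithin_le
      (f := fderiv ℝ f) (f' := fun w => fderiv ℝ (fderiv ℝ f) w) (C := K₂)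
      (fun w hw => (hfd' w).hasFDerivAt.hasFDerivWithinAt) h2 (mem_closedBall_self zero_le_one) hz
    exact this
  have hball : closedBall x ‖y‖ ⊆ closedBall x 1 := closedBall_subset_closedBall hy
  have key := (convex_closedBall x ‖y‖).norm_image_sub_le_of_norm_hasFDerivWithin_le'
    (f := f) (f' := fun w => fderiv ℝ f w) (φ := fderiv ℝ f x) (C := K₂ * ‖y‖)
    (x := x) (y := x + y)
    (fun w hw => (hf1 w).hasFDerivAt.hasFDerivWithinAt)
    (fun w hw => by
      have h1 := hlip w (hball hw)
      have h2' : ‖w - x‖ ≤ ‖y‖ := by simpa [dist_eq_norm] using hw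
      calc ‖fderiv ℝ f w - fderiv ℝ f x‖ ≤ K₂ * ‖w - x‖ := h1
        _ ≤ K₂ * ‖y‖ := by
            have hK : 0 ≤ K₂ := le_trans (norm_nonneg (fderiv ℝ (fderiv ℝ f) x)) (h2 x (mem_closedBall_self zero_le_one))
            nlinarith
      )
    (mem_closedBall_self (norm_nonneg y))
    (by simp [dist_eq_norm])
  have e : x + y - x = y := by abel
  rw [e] at key
  calc |f (x + y) - f x - fderiv ℝ f x y| ≤ K₂ * ‖y‖ * ‖y‖ := by
        simpa [Real.norm_eq_abs] using key
    _ = K₂ * ‖y‖ ^ 2 := by ring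


end AuxGen

section Levy

variable {d : ℕ}
local notation "𝔼" => EuclideanSpace ℝ (Fin d)

noncomputable def Rrem (f : EuclideanSpace ℝ (Fin d) → ℝ) (x y : EuclideanSpace ℝ (Fin d)) : ℝ :=
  f (x + y) - f x - (if ‖y‖ ≤ 1 then fderiv ℝ f x y else 0)

lemma unitBall_eq : {y : 𝔼 | ‖y‖ ≤ 1} = closedBall (0:𝔼) 1 := by
  ext y; simp [mem_closedBall, dist_zero_right]

lemma Rrem_bound {f : 𝔼 → ℝ} (hf : ContDiff ℝ 2 f) {x : 𝔼} {K₀ K₂ : ℝ}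
    (h0 : ∀ z, |f z| ≤ K₀)
    (h2 : ∀ z ∈ closedBall x 1, ‖fderiv ℝ (fderiv ℝ f) z‖ ≤ K₂) (y : 𝔼) :
    |Rrem f x y| ≤ (2*K₀ + K₂) * min 1 (‖y‖^2) := by
  have hK0 : 0 ≤ K₀ := le_trans (abs_nonneg _) (h0 0)
  have hK2 : 0 ≤ K₂ := le_trans (norm_nonneg (fderiv ℝ (fderiv ℝ f) x)) (h2 x (mem_closedBall_self zero_le_one))
  by_cases hy : ‖y‖ ≤ 1
  · have hmin : min 1 (‖y‖^2) = ‖y‖^2 := min_eq_right (by nlinarith [norm_nonneg y])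
    rw [Rrem, if_pos hy, hmin]
    calc |f (x + y) - f x - fderiv ℝ f x y| ≤ K₂ * ‖y‖^2 := taylor2_bound hf h2 hy
      _ ≤ (2*K₀ + K₂) * ‖y‖^2 := by nlinarith [sq_nonneg ‖y‖]
  · push_neg at hy
    have hmin : min 1 (‖y‖^2) = 1 := min_eq_left (by nlinarith)
    rw [Rrem, if_neg (not_le.mpr hy), hmin]
    have h1 := abs_le.mp (h0 (x+y)); have h2' := abs_le.mp (h0 x)
    rw [sub_zero, mul_one, abs_le]
    constructor <;> nlinarith [h1.1, h1.2, h2'.1, h2'.2]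

lemma if_term_eq (L : 𝔼 →L[ℝ] ℝ) :
    (fun y : 𝔼 => if ‖y‖ ≤ 1 then L y else 0)
      = Set.indicator {y : 𝔼 | ‖y‖ ≤ 1} (fun y => L y) := by
  funext y
  simp [Set.indicator_apply, Set.mem_setOf_eq]

lemma unitBall_measurable : MeasurableSet {y : 𝔼 | ‖y‖ ≤ 1} := by
  rw [unitBall_eq]; exact measurableSet_closedBall

lemma Rrem_aesm {f : 𝔼 → ℝ} (hf : ContDiff ℝ 2 f) (x : 𝔼) (ρ : Measure 𝔼) :
    AEStronglyMeasurable (Rrem f x) ρ := by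
  have hc : Continuous f := hf.continuous
  have h1 : Measurable fun y : 𝔼 => f (x + y) - f x :=
    ((hc.comp (continuous_const.add continuous_id)).sub continuous_const).measurable
  have h2 : Measurable fun y : 𝔼 => (if ‖y‖ ≤ 1 then fderiv ℝ f x y else 0) := by
    rw [if_term_eq]
    exact ((fderiv ℝ f x).continuous.measurable).indicator unitBall_measurable
  exact (h1.sub h2).aestronglyMeasurable

lemma integrable_min_sq_fin (ρ : Measure 𝔼) [IsFiniteMeasure ρ] :
    Integrable (fun y : 𝔼 => min 1 (‖y‖^2)) ρ := by
  refine (integrable_const (1:ℝ)).mono' ?_ ?_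
  · exact (continuous_const.min ((continuous_norm).pow 2)).aestronglyMeasurable
  · refine ae_of_all _ fun y => ?_
    rw [Real.norm_eq_abs, abs_of_nonneg (le_min zero_le_one (sq_nonneg _))]
    exact min_le_left _ _

lemma integrable_min_sq_nu (ν : Measure 𝔼)
    (hνfin : (∫⁻ y, ENNReal.ofReal (min 1 (‖y‖^2)) ∂ν) ≠ ⊤) :
    Integrable (fun y : 𝔼 => min 1 (‖y‖^2)) ν := by
  have hm : AEStronglyMeasurable (fun y : 𝔼 => min 1 (‖y‖^2)) ν :=
    (continuous_const.min ((continuous_norm).pow 2)).aestronglyMeasurable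
  refine ⟨hm, ?_⟩
  rw [hasFiniteIntegral_iff_ofReal (ae_of_all _ fun y => le_min zero_le_one (sq_nonneg _))]
  exact lt_top_iff_ne_top.mpr hνfin

lemma min_sq_nonneg_integral (ρ : Measure 𝔼) : 0 ≤ ∫ y, min 1 (‖y‖^2) ∂ρ :=
  integral_nonneg fun y => le_min zero_le_one (sq_nonneg _)

lemma Rrem_integrable {f : 𝔼 → ℝ} (hf : ContDiff ℝ 2 f) {x : 𝔼} {K₀ K₂ : ℝ}
    (h0 : ∀ z, |f z| ≤ K₀) (h2 : ∀ z ∈ closedBall x 1, ‖fderiv ℝ (fderiv ℝ f) z‖ ≤ K₂)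
    (ρ : Measure 𝔼) (hmin : Integrable (fun y : 𝔼 => min 1 (‖y‖^2)) ρ) :
    Integrable (Rrem f x) ρ :=
  ((hmin.const_mul (2*K₀ + K₂))).mono' (Rrem_aesm hf x ρ)
    (ae_of_all _ fun y => by simpa [Real.norm_eq_abs] using Rrem_bound hf h0 h2 y)

lemma Rrem_abs_integral_le {f : 𝔼 → ℝ} (hf : ContDiff ℝ 2 f) {x : 𝔼} {K₀ K₂ : ℝ}
    (h0 : ∀ z, |f z| ≤ K₀) (h2 : ∀ z ∈ closedBall x 1, ‖fderiv ℝ (fderiv ℝ f) z‖ ≤ K₂)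
    (ρ : Measure 𝔼) (hmin : Integrable (fun y : 𝔼 => min 1 (‖y‖^2)) ρ) :
    |∫ y, Rrem f x y ∂ρ| ≤ (2*K₀ + K₂) * ∫ y, min 1 (‖y‖^2) ∂ρ := by
  have hR := Rrem_integrable hf h0 h2 ρ hmin
  calc |∫ y, Rrem f x y ∂ρ| ≤ ∫ y, |Rrem f x y| ∂ρ := by
        simpa [Real.norm_eq_abs] using norm_integral_le_integral_norm (Rrem f x) (μ := ρ)
    _ ≤ ∫ y, (2*K₀ + K₂) * min 1 (‖y‖^2) ∂ρ :=
        integral_mono hR.abs (hmin.const_mul _) (fun y => Rrem_bound hf h0 h2 y)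
    _ = (2*K₀ + K₂) * ∫ y, min 1 (‖y‖^2) ∂ρ := integral_const_mul _ _

lemma integrableOn_id_unitBall (ρ : Measure 𝔼) [IsFiniteMeasure ρ] :
    IntegrableOn (fun y : 𝔼 => y) {y : 𝔼 | ‖y‖ ≤ 1} ρ := by
  refine Integrable.mono' (integrable_const (1:ℝ)) ?_ ?_
  · exact continuous_id.aestronglyMeasurable
  · exact (ae_restrict_iff' unitBall_measurable).2 (ae_of_all _ fun y hy => hy)

lemma key_split (ρ : Measure 𝔼) [IsFiniteMeasure ρ] {f : 𝔼 → ℝ} (hf : ContDiff ℝ 2 f)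
    {x : 𝔼} {K₀ K₂ : ℝ} (h0 : ∀ z, |f z| ≤ K₀)
    (h2 : ∀ z ∈ closedBall x 1, ‖fderiv ℝ (fderiv ℝ f) z‖ ≤ K₂) :
    ∫ y, (f (x + y) - f x) ∂ρ =
      fderiv ℝ f x (∫ y in {y : 𝔼 | ‖y‖ ≤ 1}, y ∂ρ) + ∫ y, Rrem f x y ∂ρ := by
  have hy := integrableOn_id_unitBall ρ
  have hR := Rrem_integrable hf h0 h2 ρ (integrable_min_sq_fin ρ)
  have hif : Integrable (fun y : 𝔼 => if ‖y‖ ≤ 1 then fderiv ℝ f x y else 0) ρ := by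
    rw [if_term_eq, integrable_indicator_iff unitBall_measurable]
    exact (fderiv ℝ f x).integrable_comp hy
  have heq : (fun y : 𝔼 => f (x + y) - f x)
      = fun y => Rrem f x y + (if ‖y‖ ≤ 1 then fderiv ℝ f x y else 0) := by
    funext y; rw [Rrem]; ring
  rw [heq, integral_add hR hif, add_comm]
  congr 1
  rw [if_term_eq, integral_indicator unitBall_measurable,
    ContinuousLinearMap.integral_comp_comm _ hy]

lemma key_bound (ρ : Measure 𝔼) [IsFiniteMeasure ρ] {f : 𝔼 → ℝ} (hf : ContDiff ℝ 2 f)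
    {x : 𝔼} {e₀ e₁ e₂ : ℝ} (h0 : ∀ z, |f z| ≤ e₀) (h1 : ‖fderiv ℝ f x‖ ≤ e₁)
    (h2 : ∀ z ∈ closedBall x 1, ‖fderiv ℝ (fderiv ℝ f) z‖ ≤ e₂) :
    |∫ y, (f (x + y) - f x) ∂ρ| ≤
      e₁ * ‖∫ y in {y : 𝔼 | ‖y‖ ≤ 1}, y ∂ρ‖ + (2*e₀ + e₂) * ∫ y, min 1 (‖y‖^2) ∂ρ := by
  rw [key_split ρ hf h0 h2]
  have hA : |fderiv ℝ f x (∫ y in {y : 𝔼 | ‖y‖ ≤ 1}, y ∂ρ)|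
      ≤ e₁ * ‖∫ y in {y : 𝔼 | ‖y‖ ≤ 1}, y ∂ρ‖ := by
    rw [← Real.norm_eq_abs]
    calc ‖fderiv ℝ f x (∫ y in {y : 𝔼 | ‖y‖ ≤ 1}, y ∂ρ)‖
        ≤ ‖fderiv ℝ f x‖ * ‖∫ y in {y : 𝔼 | ‖y‖ ≤ 1}, y ∂ρ‖ := (fderiv ℝ f x).le_opNorm _
      _ ≤ e₁ * ‖∫ y in {y : 𝔼 | ‖y‖ ≤ 1}, y ∂ρ‖ :=
          mul_le_mul_of_nonneg_right h1 (norm_nonneg _)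
  have hB := Rrem_abs_integral_le hf h0 h2 ρ (integrable_min_sq_fin ρ)
  calc |fderiv ℝ f x (∫ y in {y : 𝔼 | ‖y‖ ≤ 1}, y ∂ρ) + ∫ y, Rrem f x y ∂ρ|
      ≤ |fderiv ℝ f x (∫ y in {y : 𝔼 | ‖y‖ ≤ 1}, y ∂ρ)| + |∫ y, Rrem f x y ∂ρ| := abs_add_le _ _
    _ ≤ _ := add_le_add hA hB

lemma quotient_bound (ρ : Measure 𝔼) [IsProbabilityMeasure ρ] {f : 𝔼 → ℝ}
    (hf : ContDiff ℝ 2 f) {x : 𝔼} {e₀ e₁ e₂ h K : ℝ} (hh : 0 < h)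
    (hK : (1/h) * ((∫ y, min 1 (‖y‖^2) ∂ρ) + ‖∫ y in {y : 𝔼 | ‖y‖ ≤ 1}, y ∂ρ‖) ≤ K)
    (h0 : ∀ z, |f z| ≤ e₀) (h1 : ‖fderiv ℝ f x‖ ≤ e₁)
    (h2 : ∀ z ∈ closedBall x 1, ‖fderiv ℝ (fderiv ℝ f) z‖ ≤ e₂) :
    |∫ y, (f (x + y) - f x) / h ∂ρ| ≤ (e₁ + (2*e₀ + e₂)) * K := by
  have he₀ : 0 ≤ e₀ := le_trans (abs_nonneg _) (h0 0)
  have he₁ : 0 ≤ e₁ := le_trans (norm_nonneg _) h1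
  have he₂ : 0 ≤ e₂ := le_trans (norm_nonneg (fderiv ℝ (fderiv ℝ f) x)) (h2 x (mem_closedBall_self zero_le_one))
  have hkb := key_bound ρ hf h0 h1 h2
  set m := ∫ y, min 1 (‖y‖^2) ∂ρ with hm
  set w := ‖∫ y in {y : 𝔼 | ‖y‖ ≤ 1}, y ∂ρ‖ with hw
  have hm0 : 0 ≤ m := min_sq_nonneg_integral ρ
  have hw0 : 0 ≤ w := norm_nonneg _
  have hdiv : ∫ y, (f (x + y) - f x) / h ∂ρ = (∫ y, (f (x + y) - f x) ∂ρ) / h :=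
    integral_div h _
  rw [hdiv, abs_div, abs_of_pos hh, div_le_iff₀ hh]
  have hK' : m + w ≤ K * h := by
    have h2'' := mul_le_mul_of_nonneg_left hK hh.le
    have he : h * (1/h * (m + w)) = m + w := by field_simp
    rw [he] at h2''
    linarith
  have hsum : (0:ℝ) ≤ e₁ + (2*e₀ + e₂) := by linarith
  nlinarith [mul_le_mul_of_nonneg_left hK' hsum, mul_nonneg he₁ hm0,
    mul_nonneg (by linarith : (0:ℝ) ≤ 2*e₀ + e₂) hw0]

lemma levyGen_abs_bound (b : 𝔼) (σ : Matrix (Fin d) (Fin d) ℝ) (ν : Measure 𝔼)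
    (hmin : Integrable (fun y : 𝔼 => min 1 (‖y‖^2)) ν)
    {f : 𝔼 → ℝ} (hf : ContDiff ℝ 2 f) {x : 𝔼} {e₀ e₁ e₂ : ℝ}
    (h0 : ∀ z, |f z| ≤ e₀) (h1 : ‖fderiv ℝ f x‖ ≤ e₁)
    (h2 : ∀ z ∈ closedBall x 1, ‖fderiv ℝ (fderiv ℝ f) z‖ ≤ e₂) :
    |levyGen b σ ν f x| ≤ e₁ * ‖b‖ + (1/2) * (∑ i, ∑ j, |σ i j|) * e₂
      + (2*e₀ + e₂) * ∫ y, min 1 (‖y‖^2) ∂ν := by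
  have hA : |fderiv ℝ f x b| ≤ e₁ * ‖b‖ := by
    rw [← Real.norm_eq_abs]
    calc ‖fderiv ℝ f x b‖ ≤ ‖fderiv ℝ f x‖ * ‖b‖ := (fderiv ℝ f x).le_opNorm _
      _ ≤ e₁ * ‖b‖ := mul_le_mul_of_nonneg_right h1 (norm_nonneg _)
  have he₂x : ‖fderiv ℝ (fderiv ℝ f) x‖ ≤ e₂ := h2 x (mem_closedBall_self zero_le_one)
  have hterm : ∀ i j : Fin d, |σ i j * (fderiv ℝ (fderiv ℝ f) x (EuclideanSpace.single i (1:ℝ)))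
      (EuclideanSpace.single j (1:ℝ))| ≤ |σ i j| * e₂ := by
    intro i j
    rw [abs_mul]
    refine mul_le_mul_of_nonneg_left ?_ (abs_nonneg _)
    rw [← Real.norm_eq_abs]
    have s1 : ‖(fderiv ℝ (fderiv ℝ f) x (EuclideanSpace.single i (1:ℝ)))
        (EuclideanSpace.single j (1:ℝ))‖ ≤ ‖fderiv ℝ (fderiv ℝ f) x (EuclideanSpace.single i (1:ℝ))‖ *
        ‖(EuclideanSpace.single j (1:ℝ) : EuclideanSpace ℝ (Fin d))‖ :=
      ContinuousLinearMap.le_opNorm _ _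
    have s2 : ‖fderiv ℝ (fderiv ℝ f) x (EuclideanSpace.single i (1:ℝ))‖ ≤
        ‖fderiv ℝ (fderiv ℝ f) x‖ * ‖(EuclideanSpace.single i (1:ℝ) : EuclideanSpace ℝ (Fin d))‖ :=
      ContinuousLinearMap.le_opNorm _ _
    have hn : ∀ k : Fin d, ‖(EuclideanSpace.single k (1:ℝ) : EuclideanSpace ℝ (Fin d))‖ = 1 := by
      intro k; rw [EuclideanSpace.norm_single]; norm_num
    rw [hn i] at s2; rw [hn j] at s1
    simp only [mul_one] at s1 s2
    exact le_trans s1 (le_trans s2 he₂x)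
  have hB : |(1/2 : ℝ) * ∑ i, ∑ j, σ i j *
        (fderiv ℝ (fderiv ℝ f) x (EuclideanSpace.single i (1:ℝ)))
          (EuclideanSpace.single j (1:ℝ))| ≤ (1/2) * (∑ i, ∑ j, |σ i j|) * e₂ := by
    have hsum : |∑ i, ∑ j, σ i j * (fderiv ℝ (fderiv ℝ f) x (EuclideanSpace.single i (1:ℝ)))
        (EuclideanSpace.single j (1:ℝ))| ≤ (∑ i, ∑ j, |σ i j|) * e₂ := by
      refine le_trans (Finset.abs_sum_le_sum_abs _ _) ?_
      rw [Finset.sum_mul]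
      refine Finset.sum_le_sum fun i _ => ?_
      refine le_trans (Finset.abs_sum_le_sum_abs _ _) ?_
      rw [Finset.sum_mul]
      exact Finset.sum_le_sum fun j _ => hterm i j
    calc |(1/2 : ℝ) * ∑ i, ∑ j, σ i j *
        (fderiv ℝ (fderiv ℝ f) x (EuclideanSpace.single i (1:ℝ)))
          (EuclideanSpace.single j (1:ℝ))|
        = (1/2 : ℝ) * |∑ i, ∑ j, σ i j *
        (fderiv ℝ (fderiv ℝ f) x (EuclideanSpace.single i (1:ℝ)))
          (EuclideanSpace.single j (1:ℝ))| := by rw [abs_mul]; norm_num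
      _ ≤ (1/2 : ℝ) * ((∑ i, ∑ j, |σ i j|) * e₂) := by
          exact mul_le_mul_of_nonneg_left hsum (by norm_num)
      _ = (1/2) * (∑ i, ∑ j, |σ i j|) * e₂ := by ring
  have hC : |∫ y, (f (x + y) - f x - (if ‖y‖ ≤ 1 then fderiv ℝ f x y else 0)) ∂ν|
      ≤ (2*e₀ + e₂) * ∫ y, min 1 (‖y‖^2) ∂ν := by
    have := Rrem_abs_integral_le hf h0 h2 ν hmin
    simpa [Rrem] using this
  rw [levyGen]
  refine le_trans (abs_add_three _ _ _) ?_
  exact add_le_add (add_le_add hA hB) hC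

lemma levyGen_sub (b : 𝔼) (σ : Matrix (Fin d) (Fin d) ℝ) (ν : Measure 𝔼)
    (hmin : Integrable (fun y : 𝔼 => min 1 (‖y‖^2)) ν)
    {f₁ f₂ : 𝔼 → ℝ} (h₁ : ContDiff ℝ 2 f₁) (h₂ : ContDiff ℝ 2 f₂)
    {K₀ K₂ K₀' K₂' : ℝ} (hb₁ : ∀ z, |f₁ z| ≤ K₀) (hb₂ : ∀ z, |f₂ z| ≤ K₀') (x : 𝔼)
    (h2₁ : ∀ z ∈ closedBall x 1, ‖fderiv ℝ (fderiv ℝ f₁) z‖ ≤ K₂)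
    (h2₂ : ∀ z ∈ closedBall x 1, ‖fderiv ℝ (fderiv ℝ f₂) z‖ ≤ K₂') :
    levyGen b σ ν (fun z => f₁ z - f₂ z) x = levyGen b σ ν f₁ x - levyGen b σ ν f₂ x := by
  have hd₁ : Differentiable ℝ f₁ := h₁.differentiable two_ne_zero
  have hd₂ : Differentiable ℝ f₂ := h₂.differentiable two_ne_zero
  have hfd₁ : Differentiable ℝ (fderiv ℝ f₁) := (h₁.fderiv_right (m := 1) le_rfl).differentiable one_ne_zero
  have hfd₂ : Differentiable ℝ (fderiv ℝ f₂) := (h₂.fderiv_right (m := 1) le_rfl).differentiable one_ne_zero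
  have e1 : ∀ z : 𝔼, fderiv ℝ (fun w => f₁ w - f₂ w) z = fderiv ℝ f₁ z - fderiv ℝ f₂ z :=
    fun z => fderiv_sub (hd₁ z) (hd₂ z)
  have e2 : fderiv ℝ (fderiv ℝ (fun w => f₁ w - f₂ w)) x
      = fderiv ℝ (fderiv ℝ f₁) x - fderiv ℝ (fderiv ℝ f₂) x := by
    have e : fderiv ℝ (fun w => f₁ w - f₂ w) = fun z => fderiv ℝ f₁ z - fderiv ℝ f₂ z :=
      funext e1
    rw [e]
    exact fderiv_sub (hfd₁ x) (hfd₂ x)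
  have hi₁ : Integrable (Rrem f₁ x) ν := Rrem_integrable h₁ hb₁ h2₁ ν hmin
  have hi₂ : Integrable (Rrem f₂ x) ν := Rrem_integrable h₂ hb₂ h2₂ ν hmin
  have hInt : ∫ y, ((fun z => f₁ z - f₂ z) (x + y) - (fun z => f₁ z - f₂ z) x
        - (if ‖y‖ ≤ 1 then fderiv ℝ (fun w => f₁ w - f₂ w) x y else 0)) ∂ν
      = (∫ y, Rrem f₁ x y ∂ν) - ∫ y, Rrem f₂ x y ∂ν := by
    rw [← integral_sub hi₁ hi₂]
    apply integral_congr_ae; apply ae_of_all; intro y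
    simp only [Rrem, e1 x, ContinuousLinearMap.sub_apply]
    split_ifs <;> ring
  simp only [levyGen] at *
  rw [hInt, e1 x, e2]
  simp only [ContinuousLinearMap.sub_apply]
  rw [show (∑ i, ∑ j, σ i j * ((fderiv ℝ (fderiv ℝ f₁) x (EuclideanSpace.single i (1:ℝ)))
      (EuclideanSpace.single j (1:ℝ)) - (fderiv ℝ (fderiv ℝ f₂) x (EuclideanSpace.single i (1:ℝ)))
      (EuclideanSpace.single j (1:ℝ))))
    = (∑ i, ∑ j, σ i j * (fderiv ℝ (fderiv ℝ f₁) x (EuclideanSpace.single i (1:ℝ)))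
      (EuclideanSpace.single j (1:ℝ)))
    - (∑ i, ∑ j, σ i j * (fderiv ℝ (fderiv ℝ f₂) x (EuclideanSpace.single i (1:ℝ)))
      (EuclideanSpace.single j (1:ℝ))) from by
      rw [← Finset.sum_sub_distrib]
      refine Finset.sum_congr rfl fun i _ => ?_
      rw [← Finset.sum_sub_distrib]
      exact Finset.sum_congr rfl fun j _ => by ring]
  unfold Rrem
  ring

lemma levyGen_translate (b : 𝔼) (σ : Matrix (Fin d) (Fin d) ℝ) (ν : Measure 𝔼)
    {f : 𝔼 → ℝ} (hf : ContDiff ℝ 2 f) (x : 𝔼) :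
    levyGen b σ ν (fun z => f (x + z)) 0 = levyGen b σ ν f x := by
  have hd1 : fderiv ℝ (fun z => f (x + z)) 0 = fderiv ℝ f x := by
    rw [fderiv_comp_add f (hf.differentiable two_ne_zero) x 0, add_zero]
  have hdd : fderiv ℝ (fderiv ℝ (fun z => f (x + z))) 0 = fderiv ℝ (fderiv ℝ f) x := by
    rw [fderiv2_comp_add f hf x 0, add_zero]
  simp only [levyGen, hd1, hdd]
  congr 2
  funext y
  simp

lemma translates_net {W : Type*} [NormedAddCommGroup W] [NormedSpace ℝ W]
    [FiniteDimensional ℝ W] (F : 𝔼 → W) (hUC : UniformContinuous F) {B : ℝ}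
    (hB : ∀ z, ‖F z‖ ≤ B) (A : Set 𝔼) (hA : IsCompact A) {ε : ℝ} (hε : 0 < ε) :
    ∃ t : Finset 𝔼, ∀ x : 𝔼, ∃ xi ∈ t, ∀ z ∈ A, ‖F (x + z) - F (xi + z)‖ ≤ ε := by
  obtain ⟨δ, hδ, hδF⟩ := Metric.uniformContinuous_iff.mp hUC (ε/4) (by linarith)
  obtain ⟨Z, hZfin, hZcov⟩ := totallyBounded_iff.mp hA.totallyBounded δ hδ
  classical
  haveI : Fintype ↥(hZfin.toFinset : Finset 𝔼) := FinsetCoe.fintype _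
  set Ψ : 𝔼 → (↥(hZfin.toFinset : Finset 𝔼) → W) := fun x z => F (x + z.val) with hΨ
  have hB0 : 0 ≤ B := le_trans (norm_nonneg _) (hB 0)
  have hΨb : ∀ x, Ψ x ∈ closedBall (0 : ↥(hZfin.toFinset : Finset 𝔼) → W) B := by
    intro x
    rw [mem_closedBall, dist_zero_right]
    exact pi_norm_le_iff_of_nonneg hB0 |>.mpr fun z => hB _
  have htb : TotallyBounded (Set.range Ψ) :=
    (isCompact_closedBall (0 : ↥(hZfin.toFinset : Finset 𝔼) → W) B).totallyBounded.subset
      (range_subset_iff.mpr hΨb)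
  obtain ⟨t, hts, htfin, htcov⟩ := totallyBounded_iff_subset.mp htb
    {p | dist p.1 p.2 < ε/2} (Metric.dist_mem_uniformity (by linarith))
  set g : (↥(hZfin.toFinset : Finset 𝔼) → W) → 𝔼 := fun w =>
    if h : ∃ x, Ψ x = w then Classical.choose h else 0 with hg
  refine ⟨htfin.toFinset.image g, fun x => ?_⟩
  have hx : Ψ x ∈ ⋃ y ∈ t, {p | dist p y < ε/2} := htcov (mem_range_self x)
  simp only [mem_iUnion] at hx
  obtain ⟨w, hwt, hw⟩ := hx
  have hwr : ∃ x', Ψ x' = w := hts hwt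
  have hgw : Ψ (g w) = w := by
    rw [hg]; simp only [dif_pos hwr]; exact Classical.choose_spec hwr
  refine ⟨g w, Finset.mem_image_of_mem g (htfin.mem_toFinset.mpr hwt), fun z hz => ?_⟩
  obtain ⟨z', hz't, hz'⟩ := by
    have := hZcov hz
    simp only [mem_iUnion] at this
    exact this
  have hz'F : (z' : 𝔼) ∈ hZfin.toFinset := hZfin.mem_toFinset.mpr hz't
  have h1 : dist (F (x + z)) (F (x + z')) < ε/4 := hδF (by rwa [dist_add_left])
  have h3 : dist (F (g w + z')) (F (g w + z)) < ε/4 := by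
    refine hδF ?_
    rw [dist_add_left, dist_comm]
    exact hz'
  have h2 : dist (F (x + z')) (F (g w + z')) < ε/2 := by
    have hp : dist (Ψ x ⟨z', hz'F⟩) (Ψ (g w) ⟨z', hz'F⟩) ≤ dist (Ψ x) (Ψ (g w)) :=
      dist_le_pi_dist _ _ _
    have : dist (Ψ x) (Ψ (g w)) < ε/2 := by rw [hgw]; exact hw
    exact lt_of_le_of_lt hp this
  have := dist_triangle4 (F (x + z)) (F (x + z')) (F (g w + z')) (F (g w + z))
  rw [← dist_eq_norm]
  linarith

set_option synthInstance.maxHeartbeats 200000 in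
lemma C2_translates_net {f : 𝔼 → ℝ} (huc0 : UniformContinuous f)
    (huc1 : UniformContinuous (fun z : 𝔼 => fderiv ℝ f z))
    (huc2 : UniformContinuous (fun z : 𝔼 => fderiv ℝ (fderiv ℝ f) z))
    {K₀ K₁ K₂ : ℝ} (hb0 : ∀ z, |f z| ≤ K₀) (hb1 : ∀ z, ‖fderiv ℝ f z‖ ≤ K₁)
    (hb2 : ∀ z, ‖fderiv ℝ (fderiv ℝ f) z‖ ≤ K₂)
    (A : Set 𝔼) (hA : IsCompact A) {ε : ℝ} (hε : 0 < ε) :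
    ∃ t : Finset 𝔼, ∀ x : 𝔼, ∃ xi ∈ t, ∀ z ∈ A,
      |f (x + z) - f (xi + z)| ≤ ε ∧ ‖fderiv ℝ f (x + z) - fderiv ℝ f (xi + z)‖ ≤ ε ∧
      ‖fderiv ℝ (fderiv ℝ f) (x + z) - fderiv ℝ (fderiv ℝ f) (xi + z)‖ ≤ ε := by
  set F : 𝔼 → ℝ × ((𝔼 →L[ℝ] ℝ) × (𝔼 →L[ℝ] (𝔼 →L[ℝ] ℝ))) :=
    fun z => (f z, (fderiv ℝ f z, fderiv ℝ (fderiv ℝ f) z)) with hF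
  have hUC : UniformContinuous F := huc0.prodMk (huc1.prodMk huc2)
  have hbF : ∀ z, ‖F z‖ ≤ max K₀ (max K₁ K₂) := by
    intro z
    rw [hF]
    refine max_le ?_ (max_le ?_ ?_)
    · exact le_max_of_le_left (by simpa [Real.norm_eq_abs] using hb0 z)
    · exact le_max_of_le_right (le_max_of_le_left (hb1 z))
    · exact le_max_of_le_right (le_max_of_le_right (hb2 z))
  obtain ⟨t, ht⟩ := translates_net F hUC hbF A hA hε
  refine ⟨t, fun x => ?_⟩
  obtain ⟨xi, hxi, hxiz⟩ := ht x
  refine ⟨xi, hxi, fun z hz => ?_⟩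
  have h := hxiz z hz
  have e : F (x + z) - F (xi + z)
      = (f (x + z) - f (xi + z), (fderiv ℝ f (x + z) - fderiv ℝ f (xi + z),
        fderiv ℝ (fderiv ℝ f) (x + z) - fderiv ℝ (fderiv ℝ f) (xi + z))) := rfl
  rw [e] at h
  refine ⟨?_, ?_, ?_⟩
  · exact le_trans (by simpa [Real.norm_eq_abs] using norm_fst_le (f (x + z) - f (xi + z),
      (fderiv ℝ f (x + z) - fderiv ℝ f (xi + z),
        fderiv ℝ (fderiv ℝ f) (x + z) - fderiv ℝ (fderiv ℝ f) (xi + z)))) h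
  · exact le_trans (norm_fst_le (fderiv ℝ f (x + z) - fderiv ℝ f (xi + z), fderiv ℝ (fderiv ℝ f) (x + z) - fderiv ℝ (fderiv ℝ f) (xi + z))) (le_trans (norm_snd_le (f (x + z) - f (xi + z), (fderiv ℝ f (x + z) - fderiv ℝ f (xi + z), fderiv ℝ (fderiv ℝ f) (x + z) - fderiv ℝ (fderiv ℝ f) (xi + z)))) h)
  · exact le_trans (norm_snd_le (fderiv ℝ f (x + z) - fderiv ℝ f (xi + z), fderiv ℝ (fderiv ℝ f) (x + z) - fderiv ℝ (fderiv ℝ f) (xi + z))) (le_trans (norm_snd_le (f (x + z) - f (xi + z), (fderiv ℝ f (x + z) - fderiv ℝ f (xi + z), fderiv ℝ (fderiv ℝ f) (x + z) - fderiv ℝ (fderiv ℝ f) (xi + z)))) h)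

lemma tailSet_measurable (M : ℝ) : MeasurableSet {y : 𝔼 | M < ‖y‖} :=
  (isOpen_lt continuous_const continuous_norm).measurableSet

-- basic facts about the cutoff products
lemma gx_contDiff {f : 𝔼 → ℝ} (hf : ContDiff ℝ 2 f) (χ : ContDiffBump (0:𝔼)) (x : 𝔼) :
    ContDiff ℝ 2 (fun z => f (x + z) * χ z) :=
  (hf.comp (contDiff_const.add contDiff_id)).mul χ.contDiff

lemma gx_compactSupport {f : 𝔼 → ℝ} (χ : ContDiffBump (0:𝔼)) (x : 𝔼) :
    HasCompactSupport (fun z => f (x + z) * χ z) :=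
  HasCompactSupport.mul_left χ.hasCompactSupport

lemma gx_bound {f : 𝔼 → ℝ} {K₀ : ℝ} (h0 : ∀ z, |f z| ≤ K₀) (χ : ContDiffBump (0:𝔼)) (x : 𝔼) :
    ∀ z, |f (x + z) * χ z| ≤ K₀ := by
  intro z
  rw [abs_mul, abs_of_nonneg χ.nonneg]
  calc |f (x + z)| * χ z ≤ K₀ * 1 :=
    mul_le_mul (h0 _) χ.le_one χ.nonneg (le_trans (abs_nonneg _) (h0 0))
  _ = K₀ := mul_one _

lemma gx_deriv1 {f : 𝔼 → ℝ} (hf : ContDiff ℝ 2 f) (χ : ContDiffBump (0:𝔼)) (x : 𝔼)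
    {z₀ : 𝔼} (hz₀ : z₀ ∈ ball (0:𝔼) χ.rIn) :
    fderiv ℝ (fun z => f (x + z) * χ z) z₀ = fderiv ℝ f (x + z₀) := by
  have hev : (fun z => f (x + z) * χ z) =ᶠ[𝓝 z₀] (fun z => f (x + z)) := by
    refine eventually_of_mem (isOpen_ball.mem_nhds hz₀) fun z hz => ?_
    show f (x + z) * χ z = f (x + z)
    rw [χ.one_of_mem_closedBall (ball_subset_closedBall hz), mul_one]
  rw [hev.fderiv_eq, fderiv_comp_add f (hf.differentiable two_ne_zero) x z₀]

lemma gx_deriv2 {f : 𝔼 → ℝ} (hf : ContDiff ℝ 2 f) (χ : ContDiffBump (0:𝔼)) (x : 𝔼)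
    {z₀ : 𝔼} (hz₀ : z₀ ∈ ball (0:𝔼) χ.rIn) :
    fderiv ℝ (fderiv ℝ (fun z => f (x + z) * χ z)) z₀ = fderiv ℝ (fderiv ℝ f) (x + z₀) := by
  have hev : (fderiv ℝ (fun z => f (x + z) * χ z)) =ᶠ[𝓝 z₀]
      (fun z => fderiv ℝ f (x + z)) := by
    refine eventually_of_mem (isOpen_ball.mem_nhds hz₀) fun z hz => ?_
    exact gx_deriv1 hf χ x hz
  rw [hev.fderiv_eq, fderiv_comp_add (fderiv ℝ f)
    ((hf.fderiv_right (m := 1) le_rfl).differentiable one_ne_zero) x z₀]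

-- integrability of bounded continuous functions against finite measures
lemma integrable_of_bounded (ρ : Measure 𝔼) [IsFiniteMeasure ρ] {u : 𝔼 → ℝ}
    (hu : Continuous u) {K : ℝ} (hK : ∀ z, |u z| ≤ K) : Integrable u ρ :=
  (integrable_const K).mono' hu.aestronglyMeasurable
    (ae_of_all _ fun z => by rw [Real.norm_eq_abs]; exact hK z)

lemma tail_diff_bound (ρ : Measure 𝔼) [IsFiniteMeasure ρ] {u : 𝔼 → ℝ} (hu : Continuous u)
    {K₀ : ℝ} (h0 : ∀ z, |u z| ≤ K₀) {M : ℝ} (hM : 0 < M) (χ : ContDiffBump (0:𝔼))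
    (hIn : χ.rIn = M) :
    |(∫ y, (u y - u 0) ∂ρ) - ∫ y, (u y * χ y - u 0 * χ 0) ∂ρ|
      ≤ K₀ * (ρ {y : 𝔼 | M < ‖y‖}).toReal := by
  have hK₀ : 0 ≤ K₀ := le_trans (abs_nonneg _) (h0 0)
  have hχ0 : χ 0 = 1 := χ.one_of_mem_closedBall (by
    rw [mem_closedBall, dist_self, hIn]; exact hM.le)
  have hu_int : Integrable (fun y => u y - u 0) ρ :=
    ((integrable_of_bounded ρ hu h0).sub (integrable_const _))
  have huχ : Continuous fun y => u y * χ y := hu.mul χ.continuous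
  have huχ_int : Integrable (fun y => u y * χ y - u 0 * χ 0) ρ := by
    refine Integrable.sub ?_ (integrable_const _)
    exact integrable_of_bounded ρ huχ (K := K₀) (fun z => by
      rw [abs_mul, abs_of_nonneg χ.nonneg]
      calc |u z| * χ z ≤ K₀ * 1 := mul_le_mul (h0 _) χ.le_one χ.nonneg hK₀
        _ = K₀ := mul_one _)
  rw [← integral_sub hu_int huχ_int]
  have hpt : ∀ y : 𝔼, |u y - u 0 - (u y * χ y - u 0 * χ 0)|
      ≤ Set.indicator {y : 𝔼 | M < ‖y‖} (fun _ => K₀) y := by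
    intro y
    rw [hχ0, mul_one]
    by_cases hy : M < ‖y‖
    · have hy' : y ∈ {y : 𝔼 | M < ‖y‖} := hy
      rw [Set.indicator_of_mem hy']
      have h1 := abs_le.mp (h0 y)
      have hc1 := χ.nonneg (x := y)
      have hc2 := χ.le_one (x := y)
      have : u y - u 0 - (u y * χ y - u 0) = u y * (1 - χ y) := by ring
      rw [this, abs_mul, abs_of_nonneg (by linarith : (0:ℝ) ≤ 1 - χ y)]
      calc |u y| * (1 - χ y) ≤ K₀ * (1 - χ y) :=
            mul_le_mul_of_nonneg_right (h0 y) (by linarith)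
        _ ≤ K₀ * 1 := mul_le_mul_of_nonneg_left (by linarith) hK₀
        _ = K₀ := mul_one _
    · push_neg at hy
      have hχy : χ y = 1 := χ.one_of_mem_closedBall (by
        rw [mem_closedBall, dist_zero_right, hIn]; exact hy)
      rw [Set.indicator_of_notMem (by simpa using not_lt.mpr hy)]
      rw [hχy, mul_one]
      simp
  have hind : Integrable (Set.indicator {y : 𝔼 | M < ‖y‖} (fun _ => K₀)) ρ := by
    rw [integrable_indicator_iff (tailSet_measurable M)]
    exact integrableOn_const (measure_ne_top ρ _)
  calc |∫ y, (u y - u 0 - (u y * χ y - u 0 * χ 0)) ∂ρ|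
      ≤ ∫ y, |u y - u 0 - (u y * χ y - u 0 * χ 0)| ∂ρ := by
        simpa [Real.norm_eq_abs] using norm_integral_le_integral_norm
          (fun y => u y - u 0 - (u y * χ y - u 0 * χ 0)) (μ := ρ)
    _ ≤ ∫ y, Set.indicator {y : 𝔼 | M < ‖y‖} (fun _ => K₀) y ∂ρ :=
        integral_mono (hu_int.sub huχ_int).abs hind hpt
    _ = K₀ * (ρ {y : 𝔼 | M < ‖y‖}).toReal := by
        rw [integral_indicator (tailSet_measurable M), setIntegral_const, smul_eq_mul, mul_comm, measureReal_def]

lemma cheb (ρ : Measure 𝔼) [IsFiniteMeasure ρ] {c : ℝ} (hc : 0 < c) :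
    (ρ {y : 𝔼 | c < ‖y‖}).toReal * min 1 (c^2) ≤ ∫ y, min 1 (‖y‖^2) ∂ρ := by
  have hs := tailSet_measurable (d := d) c
  have hmin : Integrable (fun y : 𝔼 => min 1 (‖y‖^2)) ρ := by
    refine (integrable_const (1:ℝ)).mono'
      ((continuous_const.min ((continuous_norm).pow 2)).aestronglyMeasurable) ?_
    refine ae_of_all _ fun y => ?_
    rw [Real.norm_eq_abs, abs_of_nonneg (le_min zero_le_one (sq_nonneg _))]
    exact min_le_left _ _
  calc (ρ {y : 𝔼 | c < ‖y‖}).toReal * min 1 (c^2)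
      = ∫ _ in {y : 𝔼 | c < ‖y‖}, min 1 (c^2) ∂ρ := by rw [setIntegral_const, smul_eq_mul, measureReal_def]
    _ ≤ ∫ y in {y : 𝔼 | c < ‖y‖}, min 1 (‖y‖^2) ∂ρ := by
        refine setIntegral_mono_on (integrableOn_const (measure_ne_top ρ _))
          (hmin.integrableOn) hs fun y hy => ?_
        exact min_le_min le_rfl (by nlinarith [mem_setOf_eq ▸ hy, norm_nonneg y])
    _ ≤ ∫ y, min 1 (‖y‖^2) ∂ρ :=
        setIntegral_le_integral hmin (ae_of_all _ fun y => le_min zero_le_one (sq_nonneg _))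

lemma nu_tail_lt_top (ν : Measure 𝔼)
    (hνfin : (∫⁻ y, ENNReal.ofReal (min 1 (‖y‖^2)) ∂ν) ≠ ⊤) {c : ℝ} (hc : 1 ≤ c) :
    ν {y : 𝔼 | c < ‖y‖} ≠ ⊤ := by
  have h1 : ν {y : 𝔼 | c < ‖y‖} ≤ ∫⁻ y, ENNReal.ofReal (min 1 (‖y‖^2)) ∂ν := by
    have : ν {y : 𝔼 | c < ‖y‖} = ∫⁻ _ in {y : 𝔼 | c < ‖y‖}, 1 ∂ν := by
      rw [setLIntegral_one]
    rw [this]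
    refine le_trans (setLIntegral_mono' (tailSet_measurable c) fun y hy => ?_)
      (setLIntegral_le_lintegral _ _)
    have hy1 : 1 < ‖y‖ := lt_of_lt_of_le (lt_of_le_of_lt hc hy) le_rfl
    have : min 1 (‖y‖^2) = 1 := min_eq_left (by nlinarith)
    rw [this]; simp
  exact fun hcon => hνfin (top_le_iff.mp (hcon ▸ h1))

lemma nu_tail_small (ν : Measure 𝔼)
    (hνfin : (∫⁻ y, ENNReal.ofReal (min 1 (‖y‖^2)) ∂ν) ≠ ⊤) {ε : ℝ} (hε : 0 < ε) :
    ∃ c : ℝ, 2 ≤ c ∧ (ν {y : 𝔼 | c < ‖y‖}).toReal ≤ ε := by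
  set S : ℕ → Set 𝔼 := fun n => {y : 𝔼 | (2 + n : ℝ) < ‖y‖} with hS
  have hmono : Antitone S := by
    intro n m hnm y hy
    simp only [hS, mem_setOf_eq] at *
    have : (2 + (n:ℝ)) ≤ 2 + (m:ℝ) := by
      have := (Nat.cast_le (α := ℝ)).mpr hnm; linarith
    linarith
  have hfin : ν (S 0) ≠ ⊤ := by
    have := nu_tail_lt_top ν hνfin (c := 2) (by norm_num)
    simpa [hS] using this
  have hempty : ⋂ n, S n = ∅ := by
    ext y
    simp only [mem_iInter, mem_empty_iff_false, iff_false, not_forall, hS, mem_setOf_eq]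
    obtain ⟨n, hn⟩ := exists_nat_ge ‖y‖
    exact ⟨n, by push_neg; linarith⟩
  have htend : Tendsto (ν ∘ S) atTop (𝓝 0) := by
    have := tendsto_measure_iInter_atTop (μ := ν)
      (fun n => (tailSet_measurable _).nullMeasurableSet) hmono ⟨0, hfin⟩
    rwa [hempty, measure_empty] at this
  have hev := htend.eventually_lt_const (ENNReal.ofReal_pos.mpr hε)
  obtain ⟨n, hn⟩ := hev.exists
  refine ⟨2 + n, by linarith [Nat.cast_nonneg (α := ℝ) n], ?_⟩
  exact ENNReal.toReal_le_of_le_ofReal hε.le (le_of_lt hn)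

lemma levyGen_translate' (b : 𝔼) (σ : Matrix (Fin d) (Fin d) ℝ) (ν : Measure 𝔼)
    {f : 𝔼 → ℝ} (hf : ContDiff ℝ 2 f) (v x : 𝔼) :
    levyGen b σ ν (fun z => f (v + z)) x = levyGen b σ ν f (v + x) := by
  have hd1 : fderiv ℝ (fun z => f (v + z)) x = fderiv ℝ f (v + x) :=
    fderiv_comp_add f (hf.differentiable two_ne_zero) v x
  have hdd : fderiv ℝ (fderiv ℝ (fun z => f (v + z))) x = fderiv ℝ (fderiv ℝ f) (v + x) :=
    fderiv2_comp_add f hf v x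
  simp only [levyGen, hd1, hdd]
  congr 2
  funext y
  simp [add_assoc]

lemma levyGen_cutoff_diff (b : 𝔼) (σ : Matrix (Fin d) (Fin d) ℝ) (ν : Measure 𝔼)
    (hmin : Integrable (fun y : 𝔼 => min 1 (‖y‖^2)) ν)
    {f : 𝔼 → ℝ} (hf : ContDiff ℝ 2 f) (x : 𝔼) {K₀ K₂ : ℝ}
    (h0 : ∀ z, |f z| ≤ K₀) (h2 : ∀ z, ‖fderiv ℝ (fderiv ℝ f) z‖ ≤ K₂)
    {M : ℝ} (hM : 2 ≤ M) (χ : ContDiffBump (0:𝔼)) (hIn : χ.rIn = M)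
    (hfin : ν {y : 𝔼 | M < ‖y‖} ≠ ⊤) :
    |levyGen b σ ν f x - levyGen b σ ν (fun z => f (x + z) * χ z) 0|
      ≤ K₀ * (ν {y : 𝔼 | M < ‖y‖}).toReal := by
  have hK₀ : 0 ≤ K₀ := le_trans (abs_nonneg _) (h0 0)
  have hucd : ContDiff ℝ 2 (fun z : 𝔼 => f (x + z)) := hf.comp (contDiff_const.add contDiff_id)
  have h0mem : (0:𝔼) ∈ ball (0:𝔼) χ.rIn := by
    rw [mem_ball, dist_self, hIn]; linarith
  have hd1u : fderiv ℝ (fun z : 𝔼 => f (x + z)) 0 = fderiv ℝ f x := by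
    rw [fderiv_comp_add f (hf.differentiable two_ne_zero) x 0, add_zero]
  have hd2u : fderiv ℝ (fderiv ℝ (fun z : 𝔼 => f (x + z))) 0 = fderiv ℝ (fderiv ℝ f) x := by
    rw [fderiv2_comp_add f hf x 0, add_zero]
  have hd1g : fderiv ℝ (fun z : 𝔼 => f (x + z) * χ z) 0 = fderiv ℝ f x := by
    rw [gx_deriv1 hf χ x h0mem, add_zero]
  have hd2g : fderiv ℝ (fderiv ℝ (fun z : 𝔼 => f (x + z) * χ z)) 0
      = fderiv ℝ (fderiv ℝ f) x := by
    rw [gx_deriv2 hf χ x h0mem, add_zero]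
  have h2u : ∀ z ∈ closedBall (0:𝔼) 1,
      ‖fderiv ℝ (fderiv ℝ (fun z : 𝔼 => f (x + z))) z‖ ≤ K₂ := by
    intro z _; rw [fderiv2_comp_add f hf x z]; exact h2 _
  have h2g : ∀ z ∈ closedBall (0:𝔼) 1,
      ‖fderiv ℝ (fderiv ℝ (fun z : 𝔼 => f (x + z) * χ z)) z‖ ≤ K₂ := by
    intro z hz
    have hzb : z ∈ ball (0:𝔼) χ.rIn := by
      rw [mem_ball, dist_zero_right, hIn]
      have := mem_closedBall.mp hz; rw [dist_zero_right] at this; linarith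
    rw [gx_deriv2 hf χ x hzb]; exact h2 _
  have h0u : ∀ z, |(fun z : 𝔼 => f (x + z)) z| ≤ K₀ := fun z => h0 _
  have hRu : Integrable (Rrem (fun z : 𝔼 => f (x + z)) 0) ν :=
    Rrem_integrable hucd h0u h2u ν hmin
  have hRg : Integrable (Rrem (fun z : 𝔼 => f (x + z) * χ z) 0) ν :=
    Rrem_integrable (gx_contDiff hf χ x) (gx_bound h0 χ x) h2g ν hmin
  have hχ0 : χ 0 = 1 := χ.one_of_mem_closedBall (by
    rw [mem_closedBall, dist_self, hIn]; linarith)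
  have hptd : ∀ y : 𝔼, Rrem (fun z : 𝔼 => f (x + z)) 0 y
      - Rrem (fun z : 𝔼 => f (x + z) * χ z) 0 y = f (x + y) * (1 - χ y) := by
    intro y
    simp only [Rrem, hd1u, hd1g, zero_add, add_zero, hχ0, mul_one]
    ring
  have hIeq : (∫ y, Rrem (fun z : 𝔼 => f (x + z)) 0 y ∂ν)
        - ∫ y, Rrem (fun z : 𝔼 => f (x + z) * χ z) 0 y ∂ν
      = ∫ y, f (x + y) * (1 - χ y) ∂ν := by
    rw [← integral_sub hRu hRg]
    exact integral_congr_ae (ae_of_all _ hptd)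
  have hDint : Integrable (fun y : 𝔼 => f (x + y) * (1 - χ y)) ν :=
    (hRu.sub hRg).congr (ae_of_all _ hptd)
  have hindint : Integrable (Set.indicator {y : 𝔼 | M < ‖y‖} (fun _ => K₀)) ν := by
    rw [integrable_indicator_iff (tailSet_measurable M)]
    exact integrableOn_const hfin
  have hpt : ∀ y : 𝔼, |f (x + y) * (1 - χ y)|
      ≤ Set.indicator {y : 𝔼 | M < ‖y‖} (fun _ => K₀) y := by
    intro y
    by_cases hy : M < ‖y‖
    · have hy' : y ∈ {y : 𝔼 | M < ‖y‖} := hy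
      rw [Set.indicator_of_mem hy']
      have hc1 := χ.nonneg (x := y)
      have hc2 := χ.le_one (x := y)
      rw [abs_mul, abs_of_nonneg (by linarith : (0:ℝ) ≤ 1 - χ y)]
      calc |f (x + y)| * (1 - χ y) ≤ K₀ * (1 - χ y) :=
            mul_le_mul_of_nonneg_right (h0 _) (by linarith)
        _ ≤ K₀ * 1 := mul_le_mul_of_nonneg_left (by linarith) hK₀
        _ = K₀ := mul_one _
    · push_neg at hy
      have hχy : χ y = 1 := χ.one_of_mem_closedBall (by
        rw [mem_closedBall, dist_zero_right, hIn]; exact hy)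
      rw [Set.indicator_of_notMem (by simpa using not_lt.mpr hy), hχy]
      simp
  have hbound : |∫ y, f (x + y) * (1 - χ y) ∂ν| ≤ K₀ * (ν {y : 𝔼 | M < ‖y‖}).toReal := by
    calc |∫ y, f (x + y) * (1 - χ y) ∂ν| ≤ ∫ y, |f (x + y) * (1 - χ y)| ∂ν := by
          have hni := norm_integral_le_integral_norm
            (fun y : 𝔼 => f (x + y) * (1 - χ y)) (μ := ν)
          simpa only [Real.norm_eq_abs] using hni
      _ ≤ ∫ y, Set.indicator {y : 𝔼 | M < ‖y‖} (fun _ => K₀) y ∂ν :=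
          integral_mono hDint.abs hindint hpt
      _ = K₀ * (ν {y : 𝔼 | M < ‖y‖}).toReal := by
          rw [integral_indicator (tailSet_measurable M), setIntegral_const, smul_eq_mul, mul_comm, measureReal_def]
  have htr : levyGen b σ ν f x = levyGen b σ ν (fun z : 𝔼 => f (x + z)) 0 := by
    rw [levyGen_translate' b σ ν hf x 0, add_zero]
  rw [htr]
  have e_u : levyGen b σ ν (fun z : 𝔼 => f (x + z)) 0
      = fderiv ℝ f x b + (1/2) * (∑ i, ∑ j, σ i j *
          (fderiv ℝ (fderiv ℝ f) x (EuclideanSpace.single i (1:ℝ)))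
          (EuclideanSpace.single j (1:ℝ)))
        + ∫ y, Rrem (fun z : 𝔼 => f (x + z)) 0 y ∂ν := by
    simp only [levyGen, hd1u, hd2u, Rrem]
  have e_g : levyGen b σ ν (fun z : 𝔼 => f (x + z) * χ z) 0
      = fderiv ℝ f x b + (1/2) * (∑ i, ∑ j, σ i j *
          (fderiv ℝ (fderiv ℝ f) x (EuclideanSpace.single i (1:ℝ)))
          (EuclideanSpace.single j (1:ℝ)))
        + ∫ y, Rrem (fun z : 𝔼 => f (x + z) * χ z) 0 y ∂ν := by
    simp only [levyGen, hd1g, hd2g, Rrem]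
  rw [e_u, e_g]
  have : ∀ a s c c' : ℝ, (a + s + c) - (a + s + c') = c - c' := by intros; ring
  rw [this, hIeq]
  exact hbound

lemma mu_tail_eventually (μ : ℝ → Measure 𝔼)
    (hprob : ∀ t : ℝ, 0 < t → IsProbabilityMeasure (μ t))
    {h₀ K : ℝ} (hh₀ : 0 < h₀)
    (hK : ∀ h : ℝ, 0 < h → h < h₀ →
      (1/h) * ((∫ y, min 1 (‖y‖^2) ∂(μ h)) + ‖∫ y in {y : 𝔼 | ‖y‖ ≤ 1}, y ∂(μ h)‖) ≤ K)
    {Mt ε : ℝ} (hMt : 0 < Mt)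
    (hlim : limsup (fun h : ℝ =>
      ((μ h) {y : 𝔼 | Mt < ‖y‖}).toReal / h) (𝓝[>] (0:ℝ)) < ε)
    (hs : ℕ → ℝ) (hspos : ∀ n, 0 < hs n) (hsnull : Tendsto hs atTop (𝓝 0)) :
    ∀ᶠ n in atTop, ((μ (hs n)) {y : 𝔼 | Mt < ‖y‖}).toReal / hs n < ε := by
  have hminpos : 0 < min 1 (Mt^2) := lt_min one_pos (by positivity)
  have hBnd : ∀ᶠ h in 𝓝[>] (0:ℝ),
      ((μ h) {y : 𝔼 | Mt < ‖y‖}).toReal / h ≤ K / min 1 (Mt^2) := by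
    have hmem : Ioo (0:ℝ) h₀ ∈ 𝓝[>] (0:ℝ) := Ioo_mem_nhdsGT_of_mem ⟨le_rfl, hh₀⟩
    filter_upwards [hmem] with h hh
    haveI := hprob h hh.1
    have hch := cheb (μ h) hMt
    have h1 : (1/h) * (∫ y, min 1 (‖y‖^2) ∂(μ h)) ≤ K := by
      have hKh := hK h hh.1 hh.2
      have hn : 0 ≤ ‖∫ y in {y : 𝔼 | ‖y‖ ≤ 1}, y ∂(μ h)‖ := norm_nonneg _
      have hstep := mul_le_mul_of_nonneg_left
        (le_add_of_nonneg_right hn : (∫ y, min 1 (‖y‖^2) ∂(μ h)) ≤ _)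
        (le_of_lt (one_div_pos.mpr hh.1))
      linarith
    have hm_le : (∫ y, min 1 (‖y‖^2) ∂(μ h)) ≤ K * h := by
      have h2'' := mul_le_mul_of_nonneg_left h1 hh.1.le
      have he : h * (1/h * (∫ y, min 1 (‖y‖^2) ∂(μ h))) = ∫ y, min 1 (‖y‖^2) ∂(μ h) := by
        rw [← mul_assoc, mul_one_div_cancel (ne_of_gt hh.1), one_mul]
      rw [he] at h2''
      linarith
    rw [div_le_div_iff₀ hh.1 hminpos]
    nlinarith [hch]
  have hb : IsBoundedUnder (· ≤ ·) (𝓝[>] (0:ℝ))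
      (fun h => ((μ h) {y : 𝔼 | Mt < ‖y‖}).toReal / h) :=
    isBoundedUnder_of_eventually_le hBnd
  have hev := Filter.eventually_lt_of_limsup_lt hlim hb
  have hmap : Tendsto hs atTop (𝓝[>] (0:ℝ)) :=
    tendsto_nhdsWithin_of_tendsto_nhds_of_eventually_within hs hsnull
      (Eventually.of_forall fun n => hspos n)
  exact hmap.eventually hev

lemma levyGen_uniformContinuous (b : 𝔼) (σ : Matrix (Fin d) (Fin d) ℝ) (ν : Measure 𝔼)
    (hmin : Integrable (fun y : 𝔼 => min 1 (‖y‖^2)) ν)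
    {f : 𝔼 → ℝ} (hf : ContDiff ℝ 2 f)
    (huc0 : UniformContinuous f)
    (huc1 : UniformContinuous fun z : 𝔼 => fderiv ℝ f z)
    (huc2 : UniformContinuous fun z : 𝔼 => fderiv ℝ (fderiv ℝ f) z)
    {K₀ K₂ : ℝ} (hb0 : ∀ z, |f z| ≤ K₀) (hb2 : ∀ z, ‖fderiv ℝ (fderiv ℝ f) z‖ ≤ K₂) :
    UniformContinuous (levyGen b σ ν f) := by
  rw [Metric.uniformContinuous_iff]
  intro ε hε
  set Cν := ∫ y, min 1 (‖y‖^2) ∂ν with hCν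
  set Sσ := ∑ i, ∑ j, |σ i j| with hSσ
  have hCν0 : 0 ≤ Cν := min_sq_nonneg_integral ν
  have hSσ0 : 0 ≤ Sσ := Finset.sum_nonneg fun i _ => Finset.sum_nonneg fun j _ => abs_nonneg _
  set C := ‖b‖ + (1/2)*Sσ + 3*Cν + 1 with hC
  have hCpos : 0 < C := by rw [hC]; nlinarith [norm_nonneg b]
  set e := ε / C with he
  have hepos : 0 < e := div_pos hε hCpos
  obtain ⟨δ₀, hδ₀, hm₀⟩ := Metric.uniformContinuous_iff.mp huc0 e hepos
  obtain ⟨δ₁, hδ₁, hm₁⟩ := Metric.uniformContinuous_iff.mp huc1 e hepos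
  obtain ⟨δ₂, hδ₂, hm₂⟩ := (Metric.uniformContinuous_iff (α := 𝔼) (β := 𝔼 →L[ℝ] 𝔼 →L[ℝ] ℝ)).mp huc2 e hepos
  refine ⟨min δ₀ (min δ₁ δ₂), by positivity, @fun a a' hab => ?_⟩
  set v := a - a' with hv
  have hvn : ‖v‖ < min δ₀ (min δ₁ δ₂) := by rw [hv, ← dist_eq_norm]; exact hab
  have hfv : ContDiff ℝ 2 (fun z : 𝔼 => f (v + z)) := hf.comp (contDiff_const.add contDiff_id)
  have hd1v : ∀ z, fderiv ℝ (fun z : 𝔼 => f (v + z)) z = fderiv ℝ f (v + z) := fun z =>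
    fderiv_comp_add f (hf.differentiable two_ne_zero) v z
  have hDcd : ContDiff ℝ 2 (fun z : 𝔼 => f (v + z) - f z) := hfv.sub hf
  have hD1 : ∀ z, fderiv ℝ (fun z : 𝔼 => f (v + z) - f z) z
      = fderiv ℝ f (v + z) - fderiv ℝ f z := by
    intro z
    rw [fderiv_fun_sub ((hfv.differentiable two_ne_zero) z) ((hf.differentiable two_ne_zero) z),
      hd1v z]
  have hD2 : ∀ z, fderiv ℝ (fderiv ℝ (fun z : 𝔼 => f (v + z) - f z)) z
      = fderiv ℝ (fderiv ℝ f) (v + z) - fderiv ℝ (fderiv ℝ f) z := by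
    intro z
    have e1 : fderiv ℝ (fun z : 𝔼 => f (v + z) - f z)
        = fun z => fderiv ℝ (fun w : 𝔼 => f (v + w)) z - fderiv ℝ f z := funext fun z =>
      fderiv_sub ((hfv.differentiable two_ne_zero) z) ((hf.differentiable two_ne_zero) z)
    rw [e1, fderiv_fun_sub (((hfv.fderiv_right (m := 1) le_rfl).differentiable one_ne_zero) z)
      (((hf.fderiv_right (m := 1) le_rfl).differentiable one_ne_zero) z), fderiv2_comp_add f hf v z]
  have hd : ∀ z : 𝔼, dist (v + z) z < min δ₀ (min δ₁ δ₂) := fun z => by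
    rw [dist_eq_norm]
    simpa using hvn
  have h0D : ∀ z, |f (v + z) - f z| ≤ e := fun z =>
    le_of_lt (by rw [← Real.dist_eq]; exact hm₀ (lt_of_lt_of_le (hd z) (min_le_left _ _)))
  have h1D : ∀ z, ‖fderiv ℝ f (v + z) - fderiv ℝ f z‖ ≤ e := fun z =>
    le_of_lt (by rw [← dist_eq_norm]
                 exact hm₁ (lt_of_lt_of_le (hd z)
                  (le_trans (min_le_right _ _) (min_le_left _ _))))
  have h2D : ∀ z, ‖fderiv ℝ (fderiv ℝ f) (v + z) - fderiv ℝ (fderiv ℝ f) z‖ ≤ e := fun z =>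
    le_of_lt (by refine lt_of_eq_of_lt (dist_eq_norm (fderiv ℝ (fderiv ℝ f) (v + z)) (fderiv ℝ (fderiv ℝ f) z)).symm ?_
                 exact hm₂ (lt_of_lt_of_le (hd z)
                  (le_trans (min_le_right _ _) (min_le_right _ _))))
  have key := levyGen_abs_bound b σ ν hmin hDcd (e₀ := e) (e₁ := e) (e₂ := e) (x := a')
    h0D (by rw [hD1 a']; exact h1D a') (fun z _ => by rw [hD2 z]; exact h2D z)
  have hsub : levyGen b σ ν (fun z : 𝔼 => f (v + z) - f z) a'
      = levyGen b σ ν f a - levyGen b σ ν f a' := by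
    rw [levyGen_sub b σ ν hmin hfv hf (K₀ := K₀) (K₀' := K₀) (K₂ := K₂) (K₂' := K₂)
      (fun z => hb0 _) hb0 a' (fun z _ => by rw [fderiv2_comp_add f hf v z]; exact hb2 _)
      (fun z _ => hb2 z), levyGen_translate' b σ ν hf v a']
    congr 2
    rw [hv]
    abel
  rw [Real.dist_eq, ← hsub]
  calc |levyGen b σ ν (fun z : 𝔼 => f (v + z) - f z) a'|
      ≤ e * ‖b‖ + (1/2) * Sσ * e + (2*e + e) * Cν := key
    _ = e * (C - 1) := by rw [hC]; ring
    _ < e * C := by nlinarith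
    _ = ε := by rw [he]; field_simp

lemma bounded_of_cocompact {W : Type*} [NormedAddCommGroup W] {g : 𝔼 → W} (hg : Continuous g)
    (h : Tendsto (fun x => ‖g x‖) (cocompact 𝔼) (𝓝 0)) : ∃ K : ℝ, ∀ x, ‖g x‖ ≤ K := by
  have h1 : ∀ᶠ x in cocompact 𝔼, ‖g x‖ < 1 := h.eventually (gt_mem_nhds one_pos)
  obtain ⟨S, hScomp, hS⟩ := mem_cocompact.mp h1
  obtain ⟨C, hC⟩ := hScomp.exists_bound_of_continuousOn hg.continuousOn
  refine ⟨max C 1, fun x => ?_⟩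
  by_cases hx : x ∈ S
  · exact le_max_of_le_left (hC x hx)
  · exact le_max_of_le_right (le_of_lt (hS hx))

lemma small_of_cocompact {W : Type*} [NormedAddCommGroup W] {g : 𝔼 → W}
    (h : Tendsto (fun x => ‖g x‖) (cocompact 𝔼) (𝓝 0)) {ε : ℝ} (hε : 0 < ε) :
    ∃ R : ℝ, 0 < R ∧ ∀ z : 𝔼, R ≤ ‖z‖ → ‖g z‖ ≤ ε := by
  have h1 : ∀ᶠ x in cocompact 𝔼, ‖g x‖ < ε := h.eventually (gt_mem_nhds hε)
  obtain ⟨S, hScomp, hS⟩ := mem_cocompact.mp h1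
  obtain ⟨R₀, hR₀⟩ := hScomp.isBounded.subset_closedBall 0
  refine ⟨max R₀ 0 + 1, by positivity, fun z hz => ?_⟩
  have hzS : z ∉ S := by
    intro hzS
    have := hR₀ hzS
    rw [mem_closedBall, dist_zero_right] at this
    have : ‖z‖ ≤ max R₀ 0 := le_trans this (le_max_left _ _)
    linarith
  exact le_of_lt (hS hzS)

lemma Rrem_bound_far {f : 𝔼 → ℝ} (hf : ContDiff ℝ 2 f) {x : 𝔼} {K₀ a c M : ℝ}
    (hM : 1 ≤ M) (hK₀ : ∀ z, |f z| ≤ K₀)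
    (ha : ∀ z ∈ closedBall x M, |f z| ≤ a)
    (hc : ∀ z ∈ closedBall x 1, ‖fderiv ℝ (fderiv ℝ f) z‖ ≤ c) (y : 𝔼) :
    |Rrem f x y| ≤ (2*a + c) * min 1 (‖y‖^2)
      + (2*K₀) * Set.indicator {y : 𝔼 | M < ‖y‖} (fun _ => 1) y := by
  have ha0 : 0 ≤ a := le_trans (abs_nonneg _) (ha x (mem_closedBall_self (by linarith)))
  have hc0 : 0 ≤ c := le_trans (norm_nonneg (fderiv ℝ (fderiv ℝ f) x)) (hc x (mem_closedBall_self zero_le_one))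
  have hK : 0 ≤ K₀ := le_trans (abs_nonneg _) (hK₀ 0)
  by_cases hyM : M < ‖y‖
  · have hy' : y ∈ {y : 𝔼 | M < ‖y‖} := hyM
    rw [Set.indicator_of_mem hy']
    have h1 : ¬ ‖y‖ ≤ 1 := by push_neg; linarith
    rw [Rrem, if_neg h1, sub_zero]
    have hb1 := abs_le.mp (hK₀ (x + y)); have hb2 := abs_le.mp (hK₀ x)
    have hmin0 : 0 ≤ min 1 (‖y‖^2) := le_min zero_le_one (sq_nonneg _)
    have : |f (x + y) - f x| ≤ 2*K₀ := by rw [abs_le]; constructor <;> linarith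
    nlinarith [mul_nonneg (by linarith : (0:ℝ) ≤ 2*a+c) hmin0]
  · push_neg at hyM
    have hy' : y ∉ {y : 𝔼 | M < ‖y‖} := by simpa using not_lt.mpr hyM
    rw [Set.indicator_of_notMem hy', mul_zero, add_zero]
    by_cases hy1 : ‖y‖ ≤ 1
    · have hmin : min 1 (‖y‖^2) = ‖y‖^2 := min_eq_right (by nlinarith [norm_nonneg y])
      rw [Rrem, if_pos hy1, hmin]
      calc |f (x + y) - f x - fderiv ℝ f x y| ≤ c * ‖y‖^2 := taylor2_bound hf hc hy1
        _ ≤ (2*a + c) * ‖y‖^2 := by nlinarith [sq_nonneg ‖y‖]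
    · push_neg at hy1
      have hmin : min 1 (‖y‖^2) = 1 := min_eq_left (by nlinarith)
      rw [Rrem, if_neg (not_le.mpr hy1), hmin, sub_zero, mul_one]
      have hxy : x + y ∈ closedBall x M := by
        rw [mem_closedBall, dist_eq_norm]
        simpa using hyM
      have hb1 := abs_le.mp (ha (x + y) hxy)
      have hb2 := abs_le.mp (ha x (mem_closedBall_self (by linarith)))
      rw [abs_le]; constructor <;> nlinarith

lemma Rrem_far_integral (ν : Measure 𝔼) (hmin : Integrable (fun y : 𝔼 => min 1 (‖y‖^2)) ν)
    {f : 𝔼 → ℝ} (hf : ContDiff ℝ 2 f) {x : 𝔼} {K₀ a c M : ℝ}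
    (hM : 1 ≤ M) (hK₀ : ∀ z, |f z| ≤ K₀)
    (ha : ∀ z ∈ closedBall x M, |f z| ≤ a)
    (hc : ∀ z ∈ closedBall x 1, ‖fderiv ℝ (fderiv ℝ f) z‖ ≤ c)
    (hfin : ν {y : 𝔼 | M < ‖y‖} ≠ ⊤) :
    |∫ y, Rrem f x y ∂ν| ≤ (2*a + c) * (∫ y, min 1 (‖y‖^2) ∂ν)
      + (2*K₀) * (ν {y : 𝔼 | M < ‖y‖}).toReal := by
  have hR : Integrable (Rrem f x) ν := Rrem_integrable hf hK₀ hc ν hmin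
  have hind : Integrable (Set.indicator {y : 𝔼 | M < ‖y‖} (fun _ => (1:ℝ))) ν := by
    rw [integrable_indicator_iff (tailSet_measurable M)]
    exact integrableOn_const hfin
  have hmaj : Integrable (fun y : 𝔼 => (2*a + c) * min 1 (‖y‖^2)
      + (2*K₀) * Set.indicator {y : 𝔼 | M < ‖y‖} (fun _ => 1) y) ν :=
    (hmin.const_mul _).add (hind.const_mul _)
  calc |∫ y, Rrem f x y ∂ν| ≤ ∫ y, |Rrem f x y| ∂ν := by
        simpa only [Real.norm_eq_abs] using norm_integral_le_integral_norm (Rrem f x) (μ := ν)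
    _ ≤ ∫ y, ((2*a + c) * min 1 (‖y‖^2)
        + (2*K₀) * Set.indicator {y : 𝔼 | M < ‖y‖} (fun _ => 1) y) ∂ν :=
        integral_mono hR.abs hmaj (Rrem_bound_far hf hM hK₀ ha hc)
    _ = (2*a + c) * (∫ y, min 1 (‖y‖^2) ∂ν)
        + (2*K₀) * ∫ y, Set.indicator {y : 𝔼 | M < ‖y‖} (fun _ => (1:ℝ)) y ∂ν := by
        rw [integral_add (hmin.const_mul _) (hind.const_mul _), integral_const_mul,
          integral_const_mul]
    _ = (2*a + c) * (∫ y, min 1 (‖y‖^2) ∂ν) + (2*K₀) * (ν {y : 𝔼 | M < ‖y‖}).toReal := by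
        rw [integral_indicator (tailSet_measurable M), setIntegral_const, smul_eq_mul, mul_one, measureReal_def]

lemma sigma_term_bound (σ : Matrix (Fin d) (Fin d) ℝ) {T : EuclideanSpace ℝ (Fin d) →L[ℝ] (EuclideanSpace ℝ (Fin d) →L[ℝ] ℝ)}
    {e₂ : ℝ} (hT : ‖T‖ ≤ e₂) :
    |(1/2 : ℝ) * ∑ i, ∑ j, σ i j * (T (EuclideanSpace.single i (1:ℝ)))
        (EuclideanSpace.single j (1:ℝ))| ≤ (1/2) * (∑ i, ∑ j, |σ i j|) * e₂ := by
  have hterm : ∀ i j : Fin d, |σ i j * (T (EuclideanSpace.single i (1:ℝ)))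
      (EuclideanSpace.single j (1:ℝ))| ≤ |σ i j| * e₂ := by
    intro i j
    rw [abs_mul]
    refine mul_le_mul_of_nonneg_left ?_ (abs_nonneg _)
    rw [← Real.norm_eq_abs]
    have s1 : ‖(T (EuclideanSpace.single i (1:ℝ))) (EuclideanSpace.single j (1:ℝ))‖
        ≤ ‖T (EuclideanSpace.single i (1:ℝ))‖ *
          ‖(EuclideanSpace.single j (1:ℝ) : EuclideanSpace ℝ (Fin d))‖ :=
      ContinuousLinearMap.le_opNorm _ _
    have s2 : ‖T (EuclideanSpace.single i (1:ℝ))‖ ≤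
        ‖T‖ * ‖(EuclideanSpace.single i (1:ℝ) : EuclideanSpace ℝ (Fin d))‖ :=
      ContinuousLinearMap.le_opNorm _ _
    have hn : ∀ k : Fin d, ‖(EuclideanSpace.single k (1:ℝ) : EuclideanSpace ℝ (Fin d))‖ = 1 := by
      intro k; rw [EuclideanSpace.norm_single]; norm_num
    rw [hn i] at s2; rw [hn j] at s1
    simp only [mul_one] at s1 s2
    exact le_trans s1 (le_trans s2 hT)
  have hsum : |∑ i, ∑ j, σ i j * (T (EuclideanSpace.single i (1:ℝ)))
      (EuclideanSpace.single j (1:ℝ))| ≤ (∑ i, ∑ j, |σ i j|) * e₂ := by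
    refine le_trans (Finset.abs_sum_le_sum_abs _ _) ?_
    rw [Finset.sum_mul]
    refine Finset.sum_le_sum fun i _ => ?_
    refine le_trans (Finset.abs_sum_le_sum_abs _ _) ?_
    rw [Finset.sum_mul]
    exact Finset.sum_le_sum fun j _ => hterm i j
  have habs : |(1/2 : ℝ) * ∑ i, ∑ j, σ i j * (T (EuclideanSpace.single i (1:ℝ))) (EuclideanSpace.single j (1:ℝ))| = (1/2 : ℝ) * |∑ i, ∑ j, σ i j * (T (EuclideanSpace.single i (1:ℝ))) (EuclideanSpace.single j (1:ℝ))| := by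
    rw [abs_mul]; norm_num
  rw [habs, mul_assoc]
  exact mul_le_mul_of_nonneg_left hsum (by norm_num)

end Levy

set_option maxHeartbeats 2000000 in
/-- under conditions (M) and (T), if the difference quotients converge
pointwise to `L_{(b,σ,ν)} f` for all `f ∈ C_c²`, then for every `f ∈ UC_b²` one has
`L_{(b,σ,ν)} f ∈ UC_b` and the difference quotients converge uniformly; moreover
`f ∈ C_0²` implies `L_{(b,σ,ν)} f ∈ C_0`. -/
theorem levy_generator_uniform_convergence (d : ℕ)
    (μ : ℝ → Measure (EuclideanSpace ℝ (Fin d)))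
    (hprob : ∀ t : ℝ, 0 < t → IsProbabilityMeasure (μ t))
    -- condition (M)
    (hM : ∃ h₀ > (0:ℝ), ∃ K : ℝ, ∀ h : ℝ, 0 < h → h < h₀ →
      (1/h) * ((∫ y, min 1 (‖y‖^2) ∂(μ h)) +
        ‖∫ y in {y : EuclideanSpace ℝ (Fin d) | ‖y‖ ≤ 1}, y ∂(μ h)‖) ≤ K)
    -- condition (T)
    (hT : ∀ ε : ℝ, 0 < ε → ∃ Mε : ℝ, 0 < Mε ∧
      limsup (fun h : ℝ =>
        ((μ h) {y : EuclideanSpace ℝ (Fin d) | Mε < ‖y‖}).toReal / h) (𝓝[>] (0:ℝ)) < ε)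
    -- the Lévy triplet (b,σ,ν)
    (b : EuclideanSpace ℝ (Fin d)) (σ : Matrix (Fin d) (Fin d) ℝ)
    (hσsymm : σ.IsSymm) (hσpos : σ.PosSemidef)
    (ν : Measure (EuclideanSpace ℝ (Fin d))) (hν0 : ν {0} = 0)
    (hνfin : (∫⁻ y, ENNReal.ofReal (min 1 (‖y‖^2)) ∂ν) ≠ ⊤)
    -- the null sequence
    (h : ℕ → ℝ) (hpos : ∀ n, 0 < h n) (hnull : Tendsto h atTop (𝓝 0))
    -- pointwise convergence of the difference quotients on C_c²
    (hconv : ∀ f : EuclideanSpace ℝ (Fin d) → ℝ, ContDiff ℝ 2 f → HasCompactSupport f →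
      ∀ x, Tendsto (fun n => ∫ y, (f (x + y) - f x) / h n ∂(μ (h n))) atTop
        (𝓝 (levyGen b σ ν f x))) :
    (∀ f : EuclideanSpace ℝ (Fin d) → ℝ,
      ContDiff ℝ 2 f →
      UniformContinuous f → (∃ K : ℝ, ∀ x, |f x| ≤ K) →
      UniformContinuous (fun x => fderiv ℝ f x) → (∃ K : ℝ, ∀ x, ‖fderiv ℝ f x‖ ≤ K) →
      UniformContinuous (fun x => fderiv ℝ (fderiv ℝ f) x) →
      (∃ K : ℝ, ∀ x, ‖fderiv ℝ (fderiv ℝ f) x‖ ≤ K) →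
      (UniformContinuous (levyGen b σ ν f) ∧ (∃ K : ℝ, ∀ x, |levyGen b σ ν f x| ≤ K) ∧
        ∀ ε : ℝ, 0 < ε → ∃ N : ℕ, ∀ n ≥ N, ∀ x,
          |(∫ y, (f (x + y) - f x) / h n ∂(μ (h n))) - levyGen b σ ν f x| ≤ ε)) ∧
    (∀ f : EuclideanSpace ℝ (Fin d) → ℝ,
      ContDiff ℝ 2 f →
      Tendsto f (Filter.cocompact _) (𝓝 0) →
      Tendsto (fun x => ‖fderiv ℝ f x‖) (Filter.cocompact _) (𝓝 0) →
      Tendsto (fun x => ‖fderiv ℝ (fderiv ℝ f) x‖) (Filter.cocompact _) (𝓝 0) →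
      Tendsto (levyGen b σ ν f) (Filter.cocompact _) (𝓝 0)) := by
  classical
  have hminν : Integrable (fun y : EuclideanSpace ℝ (Fin d) => min 1 (‖y‖^2)) ν :=
    integrable_min_sq_nu ν hνfin
  constructor
  · -- Part 1
    intro f hf huc0 hK0ex huc1 hK1ex huc2 hK2ex
    obtain ⟨K₀, hb0⟩ := hK0ex
    obtain ⟨K₁, hb1⟩ := hK1ex
    obtain ⟨K₂, hb2⟩ := hK2ex
    have hK₀0 : 0 ≤ K₀ := le_trans (abs_nonneg _) (hb0 0)
    have hK₁0 : 0 ≤ K₁ := le_trans (norm_nonneg _) (hb1 0)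
    have hK₂0 : 0 ≤ K₂ := le_trans (norm_nonneg (fderiv ℝ (fderiv ℝ f) 0)) (hb2 0)
    refine ⟨levyGen_uniformContinuous b σ ν hminν hf huc0 huc1 huc2 hb0 hb2, ?_, ?_⟩
    · exact ⟨K₁ * ‖b‖ + (1/2) * (∑ i, ∑ j, |σ i j|) * K₂
        + (2*K₀ + K₂) * ∫ y, min 1 (‖y‖^2) ∂ν,
        fun x => levyGen_abs_bound b σ ν hminν hf hb0 (hb1 x) (fun z _ => hb2 z)⟩
    · intro ε hε
      obtain ⟨h₀, hh₀, K, hKcond⟩ := hM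
      have hK0 : 0 ≤ K := by
        haveI := hprob (h₀/2) (by linarith)
        refine le_trans ?_ (hKcond (h₀/2) (by linarith) (by linarith))
        have hm := min_sq_nonneg_integral (μ (h₀/2))
        have hw : (0:ℝ) ≤ ‖∫ y in {y : EuclideanSpace ℝ (Fin d) | ‖y‖ ≤ 1}, y ∂(μ (h₀/2))‖ :=
          norm_nonneg _
        have h2pos : (0:ℝ) ≤ 1/(h₀/2) := by positivity
        exact mul_nonneg h2pos (by linarith)
      have hCν0 : 0 ≤ ∫ y, min 1 (‖y‖^2) ∂ν := min_sq_nonneg_integral ν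
      have hSσ0 : 0 ≤ ∑ i, ∑ j, |σ i j| :=
        Finset.sum_nonneg fun i _ => Finset.sum_nonneg fun j _ => abs_nonneg _
      set ε₁ := ε / (6*(K₀+1)) with hε₁def
      have hε₁ : 0 < ε₁ := by rw [hε₁def]; positivity
      have hden2 : 0 < 6*(4*K + ‖b‖ + (∑ i, ∑ j, |σ i j|)
          + 4*(∫ y, min 1 (‖y‖^2) ∂ν) + 1) := by
        have := norm_nonneg b; nlinarith
      set ε₂ := ε / (6*(4*K + ‖b‖ + (∑ i, ∑ j, |σ i j|)
          + 4*(∫ y, min 1 (‖y‖^2) ∂ν) + 1)) with hε₂def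
      have hε₂ : 0 < ε₂ := div_pos hε hden2
      have hsmall1 : K₀ * ε₁ ≤ ε / 6 := by
        rw [hε₁def, mul_div_assoc']
        rw [div_le_div_iff₀ (by linarith) (by norm_num : (0:ℝ) < 6)]
        nlinarith
      obtain ⟨Mt, hMt, hlim⟩ := hT ε₁ hε₁
      obtain ⟨cν, hcν2, hcνtail⟩ := nu_tail_small ν hνfin hε₁
      set M := max Mt cν with hMdef
      have hM2 : 2 ≤ M := le_trans hcν2 (le_max_right _ _)
      have hMpos : 0 < M := by linarith
      have hνfinM : ν {y : EuclideanSpace ℝ (Fin d) | M < ‖y‖} ≠ ⊤ :=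
        nu_tail_lt_top ν hνfin (by linarith)
      have hνtailM : (ν {y : EuclideanSpace ℝ (Fin d) | M < ‖y‖}).toReal ≤ ε₁ := by
        refine le_trans ?_ hcνtail
        refine ENNReal.toReal_mono (nu_tail_lt_top ν hνfin (by linarith)) (measure_mono ?_)
        intro y hy
        simp only [mem_setOf_eq] at *
        exact lt_of_le_of_lt (le_max_right Mt cν) hy
      set χ : ContDiffBump (0 : EuclideanSpace ℝ (Fin d)) :=
        ⟨M, M+1, hMpos, by linarith⟩ with hχdef
      have hIn : χ.rIn = M := rfl
      have hOut : χ.rOut = M + 1 := rfl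
      obtain ⟨t, htnet⟩ := C2_translates_net huc0 huc1 huc2 hb0 hb1 hb2
        (closedBall (0 : EuclideanSpace ℝ (Fin d)) (M+1)) (isCompact_closedBall _ _) hε₂
      have hEh : ∀ᶠ n in atTop, h n < h₀ := hnull.eventually (gt_mem_nhds hh₀)
      have hEtail0 := mu_tail_eventually μ hprob hh₀ hKcond hMt hlim h hpos hnull
      have hEconv : ∀ᶠ n in atTop, ∀ xi ∈ t,
          (∫ y, ((fun z => f (xi + z) * χ z) (0 + y) - (fun z => f (xi + z) * χ z) 0)
              / h n ∂(μ (h n)))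
            ∈ Metric.ball (levyGen b σ ν (fun z => f (xi + z) * χ z) 0) (ε/6) := by
        rw [eventually_all_finset]
        intro xi _
        exact (hconv (fun z => f (xi + z) * χ z) (gx_contDiff hf χ xi)
          (gx_compactSupport χ xi) 0) (Metric.ball_mem_nhds _ (by linarith))
      obtain ⟨N, hN⟩ := eventually_atTop.mp (hEh.and (hEtail0.and hEconv))
      refine ⟨N, fun n hn x => ?_⟩
      obtain ⟨hhn, htail, hcv⟩ := hN n hn
      haveI hPn : IsProbabilityMeasure (μ (h n)) := hprob _ (hpos n)
      have hhpos := hpos n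
      obtain ⟨xi, hxit, hnetx⟩ := htnet x
      set a₁ := ∫ y, (f (x + y) - f x) / h n ∂(μ (h n)) with ha₁def
      set a₂ := ∫ y, ((fun z => f (x + z) * χ z) (0 + y) - (fun z => f (x + z) * χ z) 0)
          / h n ∂(μ (h n)) with ha₂def
      set a₃ := ∫ y, ((fun z => f (xi + z) * χ z) (0 + y) - (fun z => f (xi + z) * χ z) 0)
          / h n ∂(μ (h n)) with ha₃def
      set a₄ := levyGen b σ ν (fun z => f (xi + z) * χ z) 0 with ha₄def
      set a₅ := levyGen b σ ν (fun z => f (x + z) * χ z) 0 with ha₅def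
      set a₆ := levyGen b σ ν f x with ha₆def
      have htailM : ((μ (h n)) {y : EuclideanSpace ℝ (Fin d) | M < ‖y‖}).toReal / h n ≤ ε₁ := by
        refine le_trans ?_ (le_of_lt htail)
        have hsub : {y : EuclideanSpace ℝ (Fin d) | M < ‖y‖}
            ⊆ {y : EuclideanSpace ℝ (Fin d) | Mt < ‖y‖} := by
          intro y hy
          simp only [mem_setOf_eq] at *
          exact lt_of_le_of_lt (le_max_left Mt cν) hy
        have hmono := ENNReal.toReal_mono (measure_ne_top (μ (h n)) _) (measure_mono hsub)
        gcongr
      -- T1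
      have hucont : Continuous (fun z : EuclideanSpace ℝ (Fin d) => f (x + z)) :=
        hf.continuous.comp (continuous_const.add continuous_id)
      have h0u : ∀ z, |(fun z : EuclideanSpace ℝ (Fin d) => f (x + z)) z| ≤ K₀ :=
        fun z => hb0 _
      have hraw := tail_diff_bound (μ (h n)) hucont h0u hMpos χ hIn
      have ha₁' : a₁ = (∫ y, ((fun z : EuclideanSpace ℝ (Fin d) => f (x + z)) y
          - (fun z : EuclideanSpace ℝ (Fin d) => f (x + z)) 0) ∂(μ (h n))) / h n := by
        rw [ha₁def, ← integral_div]
        refine integral_congr_ae (ae_of_all _ fun y => ?_)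
        simp
      have ha₂' : a₂ = (∫ y, ((fun z : EuclideanSpace ℝ (Fin d) => f (x + z)) y * χ y
          - (fun z : EuclideanSpace ℝ (Fin d) => f (x + z)) 0 * χ 0) ∂(μ (h n))) / h n := by
        rw [ha₂def, ← integral_div]
        refine integral_congr_ae (ae_of_all _ fun y => ?_)
        simp
      have hT1 : |a₁ - a₂| ≤ ε / 6 := by
        rw [ha₁', ha₂', div_sub_div_same, abs_div, abs_of_pos hhpos]
        calc |(∫ y, ((fun z : EuclideanSpace ℝ (Fin d) => f (x + z)) y
              - (fun z : EuclideanSpace ℝ (Fin d) => f (x + z)) 0) ∂(μ (h n)))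
            - ∫ y, ((fun z : EuclideanSpace ℝ (Fin d) => f (x + z)) y * χ y
              - (fun z : EuclideanSpace ℝ (Fin d) => f (x + z)) 0 * χ 0) ∂(μ (h n))| / h n
            ≤ (K₀ * ((μ (h n)) {y : EuclideanSpace ℝ (Fin d) | M < ‖y‖}).toReal) / h n := by
              gcongr
          _ = K₀ * (((μ (h n)) {y : EuclideanSpace ℝ (Fin d) | M < ‖y‖}).toReal / h n) := by
              ring
          _ ≤ K₀ * ε₁ := mul_le_mul_of_nonneg_left htailM hK₀0
          _ ≤ ε / 6 := hsmall1
      -- D estimates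
      have hxcd := gx_contDiff hf χ x
      have hicd := gx_contDiff hf χ xi
      have hDcd : ContDiff ℝ 2 (fun z : EuclideanSpace ℝ (Fin d) =>
          f (x + z) * χ z - f (xi + z) * χ z) := hxcd.sub hicd
      have h0D : ∀ z, |f (x + z) * χ z - f (xi + z) * χ z| ≤ ε₂ := by
        intro z
        by_cases hz : z ∈ closedBall (0 : EuclideanSpace ℝ (Fin d)) (M+1)
        · have hnet := (hnetx z hz).1
          have he : f (x + z) * χ z - f (xi + z) * χ z
              = (f (x + z) - f (xi + z)) * χ z := by ring
          rw [he, abs_mul, abs_of_nonneg χ.nonneg]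
          calc |f (x + z) - f (xi + z)| * χ z ≤ ε₂ * 1 :=
                mul_le_mul hnet χ.le_one χ.nonneg hε₂.le
            _ = ε₂ := mul_one _
        · have hχz : χ z = 0 := by
            refine χ.zero_of_le_dist ?_
            rw [hOut, dist_zero_right]
            rw [mem_closedBall, dist_zero_right, not_le] at hz
            exact hz.le
          rw [hχz]
          simpa using hε₂.le
      have h0mem : (0 : EuclideanSpace ℝ (Fin d))
          ∈ ball (0 : EuclideanSpace ℝ (Fin d)) χ.rIn := by
        rw [mem_ball, dist_self, hIn]; linarith
      have h0A : (0 : EuclideanSpace ℝ (Fin d))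
          ∈ closedBall (0 : EuclideanSpace ℝ (Fin d)) (M+1) := by
        rw [mem_closedBall, dist_self]; linarith
      have h1D : ‖fderiv ℝ (fun z : EuclideanSpace ℝ (Fin d) =>
          f (x + z) * χ z - f (xi + z) * χ z) 0‖ ≤ ε₂ := by
        rw [fderiv_fun_sub ((hxcd.differentiable two_ne_zero) 0)
          ((hicd.differentiable two_ne_zero) 0),
          gx_deriv1 hf χ x h0mem, gx_deriv1 hf χ xi h0mem]
        exact (hnetx 0 h0A).2.1
      have h2D : ∀ z ∈ closedBall (0 : EuclideanSpace ℝ (Fin d)) 1,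
          ‖fderiv ℝ (fderiv ℝ (fun z : EuclideanSpace ℝ (Fin d) =>
            f (x + z) * χ z - f (xi + z) * χ z)) z‖ ≤ ε₂ := by
        intro z hz
        have hz1 : ‖z‖ ≤ 1 := by rw [mem_closedBall, dist_zero_right] at hz; exact hz
        have hzM : z ∈ ball (0 : EuclideanSpace ℝ (Fin d)) χ.rIn := by
          rw [mem_ball, dist_zero_right, hIn]; linarith
        have hzA : z ∈ closedBall (0 : EuclideanSpace ℝ (Fin d)) (M+1) := by
          rw [mem_closedBall, dist_zero_right]; linarith
        have e1 : fderiv ℝ (fun z : EuclideanSpace ℝ (Fin d) =>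
            f (x + z) * χ z - f (xi + z) * χ z)
            = fun w => fderiv ℝ (fun z : EuclideanSpace ℝ (Fin d) => f (x + z) * χ z) w
              - fderiv ℝ (fun z : EuclideanSpace ℝ (Fin d) => f (xi + z) * χ z) w :=
          funext fun w => fderiv_sub ((hxcd.differentiable two_ne_zero) w)
            ((hicd.differentiable two_ne_zero) w)
        rw [e1, fderiv_fun_sub (((hxcd.fderiv_right (m := 1) le_rfl).differentiable one_ne_zero) z)
          (((hicd.fderiv_right (m := 1) le_rfl).differentiable one_ne_zero) z),
          gx_deriv2 hf χ x hzM, gx_deriv2 hf χ xi hzM]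
        exact (hnetx z hzA).2.2
      -- T2
      have hintx : Integrable (fun y => ((fun z => f (x + z) * χ z) (0 + y)
          - (fun z => f (x + z) * χ z) 0) / h n) (μ (h n)) := by
        refine Integrable.div_const ?_ _
        refine integrable_of_bounded (μ (h n))
          ((hxcd.continuous.comp (continuous_const.add continuous_id)).sub continuous_const)
          (K := 2*K₀) ?_
        intro z
        have h1' := abs_le.mp (gx_bound hb0 χ x (0 + z))
        have h2' := abs_le.mp (gx_bound hb0 χ x 0)
        show |f (x + (0 + z)) * χ (0 + z) - f (x + 0) * χ 0| ≤ 2*K₀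
        rw [abs_le]
        exact ⟨by linarith [h1'.1, h2'.2], by linarith [h1'.2, h2'.1]⟩
      have hinti : Integrable (fun y => ((fun z => f (xi + z) * χ z) (0 + y)
          - (fun z => f (xi + z) * χ z) 0) / h n) (μ (h n)) := by
        refine Integrable.div_const ?_ _
        refine integrable_of_bounded (μ (h n))
          ((hicd.continuous.comp (continuous_const.add continuous_id)).sub continuous_const)
          (K := 2*K₀) ?_
        intro z
        have h1' := abs_le.mp (gx_bound hb0 χ xi (0 + z))
        have h2' := abs_le.mp (gx_bound hb0 χ xi 0)
        show |f (xi + (0 + z)) * χ (0 + z) - f (xi + 0) * χ 0| ≤ 2*K₀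
        rw [abs_le]
        exact ⟨by linarith [h1'.1, h2'.2], by linarith [h1'.2, h2'.1]⟩
      have heq23 : a₂ - a₃ = ∫ y, ((fun z : EuclideanSpace ℝ (Fin d) =>
          f (x + z) * χ z - f (xi + z) * χ z) (0 + y)
          - (fun z : EuclideanSpace ℝ (Fin d) =>
          f (x + z) * χ z - f (xi + z) * χ z) 0) / h n ∂(μ (h n)) := by
        rw [ha₂def, ha₃def, ← integral_sub hintx hinti]
        refine integral_congr_ae (ae_of_all _ fun y => ?_)
        show ((f (x + (0 + y)) * χ (0 + y) - f (x + 0) * χ 0) / h n)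
            - ((f (xi + (0 + y)) * χ (0 + y) - f (xi + 0) * χ 0) / h n)
            = ((f (x + (0 + y)) * χ (0 + y) - f (xi + (0 + y)) * χ (0 + y))
              - (f (x + 0) * χ 0 - f (xi + 0) * χ 0)) / h n
        ring
      have hqb := quotient_bound (μ (h n)) hDcd (x := 0) hhpos
        (hKcond (h n) hhpos hhn) h0D h1D h2D
      have hT2 : |a₂ - a₃| ≤ ε / 6 := by
        rw [heq23]
        refine le_trans hqb ?_
        have he4 : (ε₂ + (2*ε₂ + ε₂)) * K = (4*K) * ε₂ := by ring
        rw [he4, hε₂def, mul_div_assoc']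
        rw [div_le_div_iff₀ hden2 (by norm_num : (0:ℝ) < 6)]
        nlinarith [norm_nonneg b]
      -- T3
      have hT3 : |a₃ - a₄| ≤ ε / 6 := by
        have := hcv xi hxit
        rw [Metric.mem_ball, Real.dist_eq] at this
        exact le_of_lt this
      -- T4
      have h2gx : ∀ z ∈ closedBall (0 : EuclideanSpace ℝ (Fin d)) 1,
          ‖fderiv ℝ (fderiv ℝ (fun z : EuclideanSpace ℝ (Fin d) =>
            f (x + z) * χ z)) z‖ ≤ K₂ := by
        intro z hz
        have hz1 : ‖z‖ ≤ 1 := by rw [mem_closedBall, dist_zero_right] at hz; exact hz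
        have hzM : z ∈ ball (0 : EuclideanSpace ℝ (Fin d)) χ.rIn := by
          rw [mem_ball, dist_zero_right, hIn]; linarith
        rw [gx_deriv2 hf χ x hzM]; exact hb2 _
      have h2gi : ∀ z ∈ closedBall (0 : EuclideanSpace ℝ (Fin d)) 1,
          ‖fderiv ℝ (fderiv ℝ (fun z : EuclideanSpace ℝ (Fin d) =>
            f (xi + z) * χ z)) z‖ ≤ K₂ := by
        intro z hz
        have hz1 : ‖z‖ ≤ 1 := by rw [mem_closedBall, dist_zero_right] at hz; exact hz
        have hzM : z ∈ ball (0 : EuclideanSpace ℝ (Fin d)) χ.rIn := by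
          rw [mem_ball, dist_zero_right, hIn]; linarith
        rw [gx_deriv2 hf χ xi hzM]; exact hb2 _
      have hsub45 := levyGen_sub b σ ν hminν hxcd hicd
        (gx_bound hb0 χ x) (gx_bound hb0 χ xi) 0 h2gx h2gi
      have habs45 := levyGen_abs_bound b σ ν hminν hDcd (x := 0) h0D h1D h2D
      have hT4 : |a₄ - a₅| ≤ ε / 6 := by
        have he45 : a₄ - a₅ = -(levyGen b σ ν (fun z : EuclideanSpace ℝ (Fin d) =>
            f (x + z) * χ z - f (xi + z) * χ z) 0) := by
          rw [hsub45, ha₄def, ha₅def]; ring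
        rw [he45, abs_neg]
        refine le_trans habs45 ?_
        have he5 : ε₂ * ‖b‖ + (1/2) * (∑ i, ∑ j, |σ i j|) * ε₂
            + (2*ε₂ + ε₂) * (∫ y, min 1 (‖y‖^2) ∂ν)
            = (‖b‖ + (1/2)*(∑ i, ∑ j, |σ i j|) + 3*(∫ y, min 1 (‖y‖^2) ∂ν)) * ε₂ := by ring
        rw [he5, hε₂def, mul_div_assoc']
        rw [div_le_div_iff₀ hden2 (by norm_num : (0:ℝ) < 6)]
        nlinarith [norm_nonneg b]
      -- T5
      have hcut := levyGen_cutoff_diff b σ ν hminν hf x hb0 hb2 hM2 χ hIn hνfinM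
      have hT5 : |a₅ - a₆| ≤ ε / 6 := by
        rw [abs_sub_comm]
        refine le_trans hcut ?_
        exact le_trans (mul_le_mul_of_nonneg_left hνtailM hK₀0) hsmall1
      have tri1 := abs_sub_le a₁ a₂ a₆
      have tri2 := abs_sub_le a₂ a₃ a₆
      have tri3 := abs_sub_le a₃ a₄ a₆
      have tri4 := abs_sub_le a₄ a₅ a₆
      linarith
  · -- Part 2 : C₀
    intro f hf hc0 hc1 hc2
    have hcont1 : Continuous fun z : EuclideanSpace ℝ (Fin d) => fderiv ℝ f z :=
      hf.continuous_fderiv two_ne_zero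
    have hcont2 : Continuous fun z : EuclideanSpace ℝ (Fin d) =>
        fderiv ℝ (fderiv ℝ f) z := (hf.fderiv_right (m := 1) le_rfl).continuous_fderiv one_ne_zero
    have hc0n : Tendsto (fun x => ‖f x‖) (Filter.cocompact (EuclideanSpace ℝ (Fin d))) (𝓝 0) := by
      simpa using hc0.norm
    obtain ⟨K₀, hK₀'⟩ := bounded_of_cocompact hf.continuous hc0n
    have hb0 : ∀ z, |f z| ≤ K₀ := fun z => by rw [← Real.norm_eq_abs]; exact hK₀' z
    obtain ⟨K₂, hb2⟩ := bounded_of_cocompact (W := EuclideanSpace ℝ (Fin d) →L[ℝ] EuclideanSpace ℝ (Fin d) →L[ℝ] ℝ) hcont2 hc2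
    have hK₀0 : 0 ≤ K₀ := le_trans (abs_nonneg _) (hb0 0)
    rw [Metric.tendsto_nhds]
    intro ε hε
    have hCν0 : 0 ≤ ∫ y, min 1 (‖y‖^2) ∂ν := min_sq_nonneg_integral ν
    have hSσ0 : 0 ≤ ∑ i, ∑ j, |σ i j| :=
      Finset.sum_nonneg fun i _ => Finset.sum_nonneg fun j _ => abs_nonneg _
    have hden1 : 0 < 2*(‖b‖ + (1/2)*(∑ i, ∑ j, |σ i j|) + 3*(∫ y, min 1 (‖y‖^2) ∂ν) + 1) := by
      have := norm_nonneg b; nlinarith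
    set ε₂ := ε / (2*(‖b‖ + (1/2)*(∑ i, ∑ j, |σ i j|)
        + 3*(∫ y, min 1 (‖y‖^2) ∂ν) + 1)) with hε₂def
    have hε₂ : 0 < ε₂ := div_pos hε hden1
    have hden0 : 0 < 2*(2*K₀ + 1) := by nlinarith
    set ε' := ε / (2*(2*K₀ + 1)) with hε'def
    have hε' : 0 < ε' := div_pos hε hden0
    obtain ⟨cν, hcν2, hcνtail⟩ := nu_tail_small ν hνfin hε'
    have hfinM : ν {y : EuclideanSpace ℝ (Fin d) | cν < ‖y‖} ≠ ⊤ :=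
      nu_tail_lt_top ν hνfin (by linarith)
    obtain ⟨R₀, hR₀pos, hR₀⟩ := small_of_cocompact hc0n hε₂
    obtain ⟨R₁, hR₁pos, hR₁⟩ := small_of_cocompact hc1 hε₂
    obtain ⟨R₂, hR₂pos, hR₂⟩ := small_of_cocompact (W := EuclideanSpace ℝ (Fin d) →L[ℝ] EuclideanSpace ℝ (Fin d) →L[ℝ] ℝ) hc2 hε₂
    set R := max (R₀ + cν) (max R₁ (R₂ + 1)) with hRdef
    have hmem : {x : EuclideanSpace ℝ (Fin d) | R ≤ ‖x‖}
        ∈ Filter.cocompact (EuclideanSpace ℝ (Fin d)) := by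
      rw [mem_cocompact]
      refine ⟨closedBall 0 R, isCompact_closedBall _ _, fun x hx => ?_⟩
      simp only [mem_compl_iff, mem_closedBall, dist_zero_right, not_le] at hx
      exact le_of_lt hx
    filter_upwards [hmem] with x hx
    rw [Real.dist_eq, sub_zero]
    -- far-field estimates
    have hxA : ∀ z ∈ closedBall x cν, |f z| ≤ ε₂ := by
      intro z hz
      rw [← Real.norm_eq_abs]
      refine hR₀ z ?_
      have h1' : ‖x - z‖ ≤ cν := by rw [← dist_eq_norm]; exact mem_closedBall'.mp hz
      have h2' : ‖x‖ - ‖z‖ ≤ ‖x - z‖ := norm_sub_norm_le _ _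
      have h3' : R₀ + cν ≤ ‖x‖ := le_trans (le_max_left _ _) hx
      linarith
    have hx1 : ‖fderiv ℝ f x‖ ≤ ε₂ := by
      refine hR₁ x ?_
      exact le_trans (le_trans (le_max_left _ _) (le_max_right _ _)) hx
    have hx2 : ∀ z ∈ closedBall x 1, ‖fderiv ℝ (fderiv ℝ f) z‖ ≤ ε₂ := by
      intro z hz
      refine hR₂ z ?_
      have h1' : ‖x - z‖ ≤ 1 := by rw [← dist_eq_norm]; exact mem_closedBall'.mp hz
      have h2' : ‖x‖ - ‖z‖ ≤ ‖x - z‖ := norm_sub_norm_le _ _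
      have h3' : R₂ + 1 ≤ ‖x‖ :=
        le_trans (le_trans (le_max_right _ _) (le_max_right _ _)) hx
      linarith
    have hRint := Rrem_far_integral ν hminν hf (x := x) (by linarith : (1:ℝ) ≤ cν)
      hb0 hxA hx2 hfinM
    have hsigma := sigma_term_bound σ (T := fderiv ℝ (fderiv ℝ f) x)
      (hx2 x (mem_closedBall_self zero_le_one))
    have hlin : |fderiv ℝ f x b| ≤ ε₂ * ‖b‖ := by
      rw [← Real.norm_eq_abs]
      calc ‖fderiv ℝ f x b‖ ≤ ‖fderiv ℝ f x‖ * ‖b‖ := (fderiv ℝ f x).le_opNorm _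
        _ ≤ ε₂ * ‖b‖ := mul_le_mul_of_nonneg_right hx1 (norm_nonneg _)
    have hCdef : ∫ y, (f (x + y) - f x - (if ‖y‖ ≤ 1 then fderiv ℝ f x y else 0)) ∂ν
        = ∫ y, Rrem f x y ∂ν := by simp only [Rrem]
    have hsplit : |levyGen b σ ν f x| ≤ |fderiv ℝ f x b|
        + |(1/2 : ℝ) * ∑ i, ∑ j, σ i j *
          (fderiv ℝ (fderiv ℝ f) x (EuclideanSpace.single i (1:ℝ)))
          (EuclideanSpace.single j (1:ℝ))|
        + |∫ y, Rrem f x y ∂ν| := by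
      rw [levyGen, hCdef]
      exact abs_add_three _ _ _
    have htailb : (2*K₀) * (ν {y : EuclideanSpace ℝ (Fin d) | cν < ‖y‖}).toReal
        ≤ 2*K₀*ε' := by
      exact mul_le_mul_of_nonneg_left hcνtail (by linarith)
    have hfinal1 : ε₂ * ‖b‖ + (1/2) * (∑ i, ∑ j, |σ i j|) * ε₂
        + (2*ε₂ + ε₂) * (∫ y, min 1 (‖y‖^2) ∂ν) < ε/2 := by
      have he5 : ε₂ * ‖b‖ + (1/2) * (∑ i, ∑ j, |σ i j|) * ε₂
          + (2*ε₂ + ε₂) * (∫ y, min 1 (‖y‖^2) ∂ν)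
          = (‖b‖ + (1/2)*(∑ i, ∑ j, |σ i j|) + 3*(∫ y, min 1 (‖y‖^2) ∂ν)) * ε₂ := by ring
      rw [he5, hε₂def, mul_div_assoc']
      rw [div_lt_div_iff₀ hden1 (by norm_num : (0:ℝ) < 2)]
      nlinarith [norm_nonneg b]
    have hfinal2 : 2*K₀*ε' < ε/2 := by
      rw [hε'def, mul_div_assoc']
      rw [div_lt_div_iff₀ hden0 (by norm_num : (0:ℝ) < 2)]
      nlinarith
    calc |levyGen b σ ν f x| ≤ |fderiv ℝ f x b|
        + |(1/2 : ℝ) * ∑ i, ∑ j, σ i j *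
          (fderiv ℝ (fderiv ℝ f) x (EuclideanSpace.single i (1:ℝ)))
          (EuclideanSpace.single j (1:ℝ))|
        + |∫ y, Rrem f x y ∂ν| := hsplit
      _ ≤ (ε₂ * ‖b‖) + ((1/2) * (∑ i, ∑ j, |σ i j|) * ε₂)
          + ((2*ε₂ + ε₂) * (∫ y, min 1 (‖y‖^2) ∂ν)
            + (2*K₀) * (ν {y : EuclideanSpace ℝ (Fin d) | cν < ‖y‖}).toReal) := by
          refine add_le_add (add_le_add hlin hsigma) ?_
          refine le_trans hRint ?_
          apply le_of_eq
          ring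
      _ < ε := by
          have := hfinal1
          have := hfinal2
          have := htailb
          linarith
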